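/- Let G = A ∗_C B be an amalgamated product of groups A and B over monomorphisms ∂₁ : C → A and ∂₂ : C → B. Let X be an A-graph, Y a B-graph, x a vertex of X fixed by ∂₁(C), and y a vertex of Y fixed by ∂₂(C). Let Z be the C-pushout of G×_A X and G×_B Y with respect to (the images of) x and y. Then the composition X ↪ G×_A X → Z of the canonical embedding with the quotient morphism is an A-equivariant embedding of graphs (injective on vertices and on edges); analogously, the composition Y ↪ G×_B Y → Z is a B-equivariant embedding. -/

import Mathlib

open Monoid

/-! ### The amalgamated product of two groups -/

/-- The amalgamated product `G₁ ∗_C G₂` determined by `G₁ ←f₁− C −f₂→ G₂`: the quotient of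
the free product `G₁ ∗ G₂` by the normal closure of the elements `f₁ c · (f₂ c)⁻¹`. -/
abbrev Amal {C G₁ G₂ : Type*} [Group C] [Group G₁] [Group G₂]
    (f₁ : C →* G₁) (f₂ : C →* G₂) : Type _ :=
  Coprod G₁ G₂ ⧸ Subgroup.normalClosure
    {x : Coprod G₁ G₂ | ∃ c : C, x = Coprod.inl (f₁ c) * (Coprod.inr (f₂ c))⁻¹}

/-- The canonical homomorphism `G₁ →* G₁ ∗_C G₂`. -/
def Amal.inl {C G₁ G₂ : Type*} [Group C] [Group G₁] [Group G₂]
    (f₁ : C →* G₁) (f₂ : C →* G₂) : G₁ →* Amal f₁ f₂ :=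
  (QuotientGroup.mk' _).comp Coprod.inl

/-- The canonical homomorphism `G₂ →* G₁ ∗_C G₂`. -/
def Amal.inr {C G₁ G₂ : Type*} [Group C] [Group G₁] [Group G₂]
    (f₁ : C →* G₁) (f₂ : C →* G₂) : G₂ →* Amal f₁ f₂ :=
  (QuotientGroup.mk' _).comp Coprod.inr

/-! ### The induced `G`-set `G ×_A S` along a homomorphism `A →* G` -/

/-- The relation defining `G ×_A S` along `ι : A →* G`: `(g · ι a, s) ~ (g, a • s)`. -/
def IndRelH {A G : Type*} [Group A] [Group G] (ι : A →* G) (S : Type*) [MulAction A S] :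
    G × S → G × S → Prop :=
  fun p q => ∃ a : A, p.1 = q.1 * ι a ∧ q.2 = a • p.2

/-- The induced `G`-set `G ×_A S` along `ι : A →* G`. -/
def IndSetH {A G : Type*} [Group A] [Group G] (ι : A →* G) (S : Type*) [MulAction A S] :
    Type _ :=
  Quot (IndRelH ι S)

/-- The class of a pair `(g, s)` in `G ×_A S`. -/
def IndSetH.mk {A G : Type*} [Group A] [Group G] (ι : A →* G) (S : Type*) [MulAction A S]
    (p : G × S) : IndSetH ι S :=
  Quot.mk _ p

instance {A G : Type*} [Group A] [Group G] (ι : A →* G) (S : Type*) [MulAction A S] :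
    SMul G (IndSetH ι S) :=
  ⟨fun g => Quot.map (fun p => (g * p.1, p.2)) (by
    rintro p q ⟨a, h1, h2⟩
    exact ⟨a, by dsimp only; rw [h1, mul_assoc], h2⟩)⟩

/-- `G` acts on `G ×_A S` by left multiplication on the first factor. -/
instance {A G : Type*} [Group A] [Group G] (ι : A →* G) (S : Type*) [MulAction A S] :
    MulAction G (IndSetH ι S) where
  one_smul := by
    rintro ⟨p⟩
    show IndSetH.mk ι S (1 * p.1, p.2) = IndSetH.mk ι S p
    rw [one_mul]
  mul_smul g h := by
    rintro ⟨p⟩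
    show IndSetH.mk ι S (g * h * p.1, p.2) = IndSetH.mk ι S (g * (h * p.1), p.2)
    rw [mul_assoc]

/-! ### The `C`-pushout of the induced graphs `G ×_A X` and `G ×_B Y` -/

section GraphPushout

variable {C G₁ G₂ : Type*} [Group C] [Group G₁] [Group G₂]
  (f₁ : C →* G₁) (f₂ : C →* G₂)
  {VX VY : Type*} [MulAction G₁ VX] [MulAction G₂ VY]

/-- The identifications defining the `C`-pushout of `G ×_{G₁} X` and `G ×_{G₂} Y` with
respect to `(x, y)`: for every `g ∈ G`, the vertex `g • x` is glued to `g • y`. -/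
def AmalPRel (x : VX) (y : VY) :
    (IndSetH (Amal.inl f₁ f₂) VX ⊕ IndSetH (Amal.inr f₁ f₂) VY) →
    (IndSetH (Amal.inl f₁ f₂) VX ⊕ IndSetH (Amal.inr f₁ f₂) VY) → Prop :=
  fun u v => ∃ g : Amal f₁ f₂,
    u = Sum.inl (IndSetH.mk (Amal.inl f₁ f₂) VX (g, x)) ∧
    v = Sum.inr (IndSetH.mk (Amal.inr f₁ f₂) VY (g, y))

/-- The vertex set of the `C`-pushout of `G ×_{G₁} X` and `G ×_{G₂} Y` w.r.t. `(x, y)`. -/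
def PushV (x : VX) (y : VY) : Type _ :=
  Quot (AmalPRel f₁ f₂ x y)

/-- The quotient map onto the vertex set of the `C`-pushout. -/
def PushV.mk (x : VX) (y : VY)
    (u : IndSetH (Amal.inl f₁ f₂) VX ⊕ IndSetH (Amal.inr f₁ f₂) VY) : PushV f₁ f₂ x y :=
  Quot.mk _ u

instance (x : VX) (y : VY) : SMul (Amal f₁ f₂) (PushV f₁ f₂ x y) :=
  ⟨fun g => Quot.map (fun u => g • u) (by
    rintro u v ⟨h, rfl, rfl⟩
    exact ⟨g * h, rfl, rfl⟩)⟩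

/-- The group `G = G₁ ∗_C G₂` acts on the `C`-pushout. -/
instance (x : VX) (y : VY) : MulAction (Amal f₁ f₂) (PushV f₁ f₂ x y) where
  one_smul := by
    rintro ⟨u⟩
    show PushV.mk f₁ f₂ x y ((1 : Amal f₁ f₂) • u) = PushV.mk f₁ f₂ x y u
    rw [one_smul]
  mul_smul g h := by
    rintro ⟨u⟩
    show PushV.mk f₁ f₂ x y ((g * h) • u) = PushV.mk f₁ f₂ x y (g • h • u)
    rw [mul_smul]

/-- The canonical map `X → Z` (composition `X ↪ G ×_{G₁} X → Z`). -/
def PushV.inX (x : VX) (y : VY) (v : VX) : PushV f₁ f₂ x y :=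
  PushV.mk f₁ f₂ x y (Sum.inl (IndSetH.mk (Amal.inl f₁ f₂) VX (1, v)))

/-- The canonical map `Y → Z` (composition `Y ↪ G ×_{G₂} Y → Z`). -/
def PushV.inY (x : VX) (y : VY) (w : VY) : PushV f₁ f₂ x y :=
  PushV.mk f₁ f₂ x y (Sum.inr (IndSetH.mk (Amal.inr f₁ f₂) VY (1, w)))

/-- The common image `z` of the vertices `x` and `y` in the `C`-pushout. -/
def PushV.basePt (x : VX) (y : VY) : PushV f₁ f₂ x y :=
  PushV.inX f₁ f₂ x y x

/-- The adjacency relation of the `C`-pushout of the graphs `G ×_{G₁} X` and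
`G ×_{G₂} Y`: edges are the edges coming from the copies of `X` and of `Y`. -/
def PushAdj (X : SimpleGraph VX) (Y : SimpleGraph VY) (x : VX) (y : VY) :
    PushV f₁ f₂ x y → PushV f₁ f₂ x y → Prop :=
  fun u v =>
    (∃ (g : Amal f₁ f₂) (a b : VX), X.Adj a b ∧
      u = PushV.mk f₁ f₂ x y (Sum.inl (IndSetH.mk (Amal.inl f₁ f₂) VX (g, a))) ∧
      v = PushV.mk f₁ f₂ x y (Sum.inl (IndSetH.mk (Amal.inl f₁ f₂) VX (g, b)))) ∨
    (∃ (g : Amal f₁ f₂) (a b : VY), Y.Adj a b ∧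
      u = PushV.mk f₁ f₂ x y (Sum.inr (IndSetH.mk (Amal.inr f₁ f₂) VY (g, a))) ∧
      v = PushV.mk f₁ f₂ x y (Sum.inr (IndSetH.mk (Amal.inr f₁ f₂) VY (g, b))))

/-- The `C`-pushout `Z` of the `G`-graphs `G ×_{G₁} X` and `G ×_{G₂} Y` w.r.t. `(x, y)`. -/
def PushGraph (X : SimpleGraph VX) (Y : SimpleGraph VY) (x : VX) (y : VY) :
    SimpleGraph (PushV f₁ f₂ x y) :=
  SimpleGraph.fromRel (PushAdj f₁ f₂ X Y x y)

end GraphPushout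


open Function

namespace AmalAux

section Adapted

variable {A : Type*} [Group A]

/-- Setoid of right cosets of `R`. -/
def rcSetoid (R : Subgroup A) : Setoid A where
  r a b := a * b⁻¹ ∈ R
  iseqv := by
    refine ⟨fun a => by simpa using R.one_mem, fun {a b} h => ?_, fun {a b c} hab hbc => ?_⟩
    · have := R.inv_mem h
      simpa [mul_inv_rev] using this
    · have := R.mul_mem hab hbc
      simpa [mul_assoc] using this

open scoped Classical in
/-- A choice of representatives of right cosets of `R`, preferring elements of `S`. -/
noncomputable def pick (R S : Subgroup A) (q : Quotient (rcSetoid R)) : A :=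
  if q = Quotient.mk (rcSetoid R) 1 then 1
  else if h : ∃ a, a ∈ S ∧ Quotient.mk (rcSetoid R) a = q then h.choose else q.out

theorem pick_spec (R S : Subgroup A) (q : Quotient (rcSetoid R)) :
    Quotient.mk (rcSetoid R) (pick R S q) = q := by
  unfold pick
  split_ifs with h1 h2
  · exact h1.symm
  · exact h2.choose_spec.2
  · exact q.out_eq

theorem pick_mem (R S : Subgroup A) (q : Quotient (rcSetoid R))
    (h : ∃ a, a ∈ S ∧ Quotient.mk (rcSetoid R) a = q) : pick R S q ∈ S := by
  unfold pick
  split_ifs with h1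
  · exact S.one_mem
  · exact h.choose_spec.1

theorem pick_one (R S : Subgroup A) : pick R S (Quotient.mk (rcSetoid R) 1) = 1 := by
  unfold pick
  rw [if_pos rfl]

theorem rel_of_mk_eq {R : Subgroup A} {a b : A}
    (h : Quotient.mk (rcSetoid R) a = Quotient.mk (rcSetoid R) b) : a * b⁻¹ ∈ R :=
  Quotient.exact h

theorem mk_eq_of_rel {R : Subgroup A} {a b : A} (h : a * b⁻¹ ∈ R) :
    Quotient.mk (rcSetoid R) a = Quotient.mk (rcSetoid R) b :=
  Quotient.sound h

theorem isComplement_pick (R S : Subgroup A) :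
    Subgroup.IsComplement (R : Set A)
      (Set.range (fun a => pick R S (Quotient.mk (rcSetoid R) a))) := by
  rw [Subgroup.isComplement_iff_existsUnique]
  intro g
  have hmem : g * (pick R S (Quotient.mk (rcSetoid R) g))⁻¹ ∈ R := by
    have := rel_of_mk_eq (pick_spec R S (Quotient.mk (rcSetoid R) g))
    have := R.inv_mem this
    simpa [mul_inv_rev] using this
  refine ⟨(⟨g * (pick R S (Quotient.mk (rcSetoid R) g))⁻¹, hmem⟩,
    ⟨pick R S (Quotient.mk (rcSetoid R) g), ⟨g, rfl⟩⟩), by simp, ?_⟩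
  rintro ⟨⟨r, hr⟩, ⟨t, ⟨a, ha⟩⟩⟩ hprod
  simp only at hprod
  have hta : Quotient.mk (rcSetoid R) t = Quotient.mk (rcSetoid R) a := by
    rw [← ha]; exact pick_spec R S _
  have hgt : Quotient.mk (rcSetoid R) g = Quotient.mk (rcSetoid R) t := by
    apply mk_eq_of_rel
    have : g * t⁻¹ = r := by rw [← hprod]; group
    rw [this]; exact hr
  have ht : t = pick R S (Quotient.mk (rcSetoid R) g) := by
    rw [hgt, hta, ← ha]
  have hrg : r = g * (pick R S (Quotient.mk (rcSetoid R) g))⁻¹ := by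
    rw [← ht, ← hprod]; group
  ext
  · simpa using hrg
  · simpa using ht

theorem equiv_snd_unique {S T : Set A} (h : Subgroup.IsComplement S T) {g r t : A}
    (hr : r ∈ S) (ht : t ∈ T) (heq : r * t = g) : ((h.equiv g).2 : A) = t := by
  have h1 : ((h.equiv g).1 : A) * ((h.equiv g).2 : A) = g :=
    h.equiv_fst_mul_equiv_snd g
  have := h.1 (a₁ := h.equiv g) (a₂ := (⟨r, hr⟩, ⟨t, ht⟩)) (by
    show ((h.equiv g).1 : A) * ((h.equiv g).2 : A) = r * t
    rw [h1, heq])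
  rw [this]

end Adapted

section Transversal

variable {A' : Type*} [Group A'] {ι : Type*} {G : ι → Type*} [∀ i, Group (G i)]
  {H : Type*} [Group H] {φ : ∀ i, H →* G i}

/-- An adapted transversal: representatives of cosets meeting `Sb i` lie in `Sb i`. -/
theorem pick_snd (R S : Subgroup A') {z : A'} :
    (((isComplement_pick R S).equiv z).2 : A') = pick R S (Quotient.mk (rcSetoid R) z) := by
  apply equiv_snd_unique
  · show z * (pick R S (Quotient.mk (rcSetoid R) z))⁻¹ ∈ R
    have := rel_of_mk_eq (pick_spec R S (Quotient.mk (rcSetoid R) z))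
    have := R.inv_mem this
    simpa [mul_inv_rev] using this
  · exact ⟨z, rfl⟩
  · group

theorem exists_adapted_transversal (hφ : ∀ i, Injective (φ i)) (Sb : ∀ i, Subgroup (G i)) :
    ∃ d : PushoutI.NormalWord.Transversal φ,
      ∀ (i : ι) (z : G i), z ∈ Sb i → (((d.compl i).equiv z).2 : G i) ∈ Sb i := by
  refine ⟨{ injective := hφ
            set := fun i => Set.range
              (fun a => pick ((φ i).range) (Sb i) (Quotient.mk (rcSetoid ((φ i).range)) a))
            one_mem := fun i => ⟨1, pick_one _ _⟩
            compl := fun i => isComplement_pick _ _ }, ?_⟩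
  intro i z hz
  show (((isComplement_pick ((φ i).range) (Sb i)).equiv z).2 : G i) ∈ Sb i
  rw [pick_snd]
  exact pick_mem _ _ _ ⟨z, hz, rfl⟩

end Transversal


section Core

variable {ι : Type*} {G : ι → Type*} [∀ i, Group (G i)] {H : Type*} [Group H]
  {φ : ∀ i, H →* G i} {Sb : ∀ i, Subgroup (G i)}

open Monoid.PushoutI Monoid.CoprodI Monoid.PushoutI.NormalWord

/-- Letters of a word lie in the given family of subgroups. -/
def SLet (Sb : ∀ i, Subgroup (G i)) (w : Word G) : Prop :=
  ∀ (i : ι) (g : G i), (⟨i, g⟩ : Σ i, G i) ∈ w.toList → g ∈ Sb i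

theorem sLet_cons {i : ι} {m : G i} {L : List (Σ i, G i)}
    (h1 : ∀ (i' : ι) (g' : G i'), (⟨i', g'⟩ : Σ i, G i) ∈ (⟨i, m⟩ :: L : List (Σ i, G i)) → g' ∈ Sb i') :
    m ∈ Sb i ∧ ∀ (i' : ι) (g' : G i'), (⟨i', g'⟩ : Σ i, G i) ∈ L → g' ∈ Sb i' :=
  ⟨h1 i m (List.mem_cons_self), fun i' g' hg => h1 i' g' (List.mem_cons_of_mem _ hg)⟩

theorem sLet_cons' {i : ι} {m : G i} {L : List (Σ i, G i)}
    (hm : m ∈ Sb i) (hL : ∀ (i' : ι) (g' : G i'), (⟨i', g'⟩ : Σ i, G i) ∈ L → g' ∈ Sb i') :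
    ∀ (i' : ι) (g' : G i'), (⟨i', g'⟩ : Σ i, G i) ∈ (⟨i, m⟩ :: L : List (Σ i, G i)) → g' ∈ Sb i' := by
  intro i' g' hg
  rcases List.mem_cons.1 hg with hg | hg
  · rcases Sigma.mk.inj_iff.1 hg with ⟨rfl, h2⟩
    rw [eq_of_heq h2]; exact hm
  · exact hL i' g' hg

/-- `ofCoprodI` of the product of a word, letterwise. -/
theorem ofCoprodI_word_prod (w : Word G) :
    (ofCoprodI w.prod : PushoutI φ) = (w.toList.map fun l => PushoutI.of (φ := φ) l.1 l.2).prod := by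
  rw [Word.prod, map_list_prod, List.map_map]
  exact congrArg List.prod (List.map_congr_left (fun l _ => by
    simp [Function.comp, ofCoprodI_of]))

theorem sLet_prod_mem {w : Word G} (hw : SLet Sb w) :
    (ofCoprodI w.prod : PushoutI φ) ∈
      Subgroup.closure (⋃ i, (PushoutI.of (φ := φ) i) '' (Sb i : Set (G i))) := by
  rw [ofCoprodI_word_prod]
  refine Subgroup.list_prod_mem _ (fun x hx => ?_)
  obtain ⟨l, hl, rfl⟩ := List.mem_map.1 hx
  refine Subgroup.subset_closure (Set.mem_iUnion.2 ⟨l.1, ⟨l.2, ?_, rfl⟩⟩)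
  exact hw l.1 l.2 hl

/-- Strengthened version of `Reduced.exists_normalWord_prod_eq` for adapted transversals. -/
theorem exists_normalWord_adapted (hSb : ∀ i, (φ i).range ≤ Sb i) (d : Transversal φ)
    (hd : ∀ (i : ι) (z : G i), z ∈ Sb i → (((d.compl i).equiv z).2 : G i) ∈ Sb i)
    {w : Word G} (hw : Reduced φ w) :
    ∃ w' : NormalWord d, w'.prod = ofCoprodI w.prod ∧
      w'.toList.map Sigma.fst = w.toList.map Sigma.fst ∧
      ((∀ (i : ι) (g : G i), (⟨i, g⟩ : Σ i, G i) ∈ w'.toList → g ∈ Sb i) ↔ SLet Sb w) := by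
  classical
  induction w using Word.consRecOn with
  | empty =>
    refine ⟨NormalWord.empty, by simp, rfl, ?_⟩
    constructor
    · intro _ i g hg
      simp [Word.empty] at hg
    · intro _ i g hg
      simp [NormalWord.empty] at hg
  | cons i g w hIdx hg1 ih =>
    rcases ih (fun _ hg => hw _ (List.mem_cons_of_mem _ hg)) with ⟨w', hw'prod, hw'map, hw'iff⟩
    have hmw : w'.fstIdx ≠ some i := by
      rwa [Word.fstIdx, ← List.head?_map, hw'map, List.head?_map]
    have hgr : g ∉ (φ i).range := hw _ (List.mem_cons_self)
    refine ⟨NormalWord.cons g w' hmw hgr, ?_, ?_, ?_⟩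
    · simp [hw'prod]
    · have : (NormalWord.cons g w' hmw hgr).toList
          = ⟨i, (((d.compl i).equiv (g * (φ i w'.head))).2 : G i)⟩ :: w'.toList := rfl
      rw [this]
      simp [hw'map, Word.cons]
    · have hlist : (NormalWord.cons g w' hmw hgr).toList
          = ⟨i, (((d.compl i).equiv (g * (φ i w'.head))).2 : G i)⟩ :: w'.toList := rfl
      have hlist2 : (Word.cons g w hIdx hg1).toList = ⟨i, g⟩ :: w.toList := rfl
      have hkey : ((((d.compl i).equiv (g * (φ i w'.head))).2 : G i) ∈ Sb i) ↔ g ∈ Sb i := by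
        constructor
        · intro hv
          have hz : g * (φ i w'.head)
              = (((d.compl i).equiv (g * (φ i w'.head))).1 : G i)
                * (((d.compl i).equiv (g * (φ i w'.head))).2 : G i) :=
            ((d.compl i).equiv_fst_mul_equiv_snd _).symm
          have hfst : (((d.compl i).equiv (g * (φ i w'.head))).1 : G i) ∈ Sb i :=
            hSb i (((d.compl i).equiv (g * (φ i w'.head))).1).2
          have : g * (φ i w'.head) ∈ Sb i := by rw [hz]; exact mul_mem hfst hv
          have := mul_mem this ((Sb i).inv_mem (hSb i ⟨w'.head, rfl⟩))
          simpa using this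
        · intro hg
          exact hd i _ (mul_mem hg (hSb i ⟨w'.head, rfl⟩))
      rw [hlist]
      unfold SLet
      rw [hlist2]
      constructor
      · intro h1
        obtain ⟨hm, hL⟩ := sLet_cons (Sb := Sb) h1
        exact sLet_cons' (hkey.1 hm) (hw'iff.1 hL)
      · intro h1
        obtain ⟨hm, hL⟩ := sLet_cons (Sb := Sb) h1
        exact sLet_cons' (hkey.2 hm) (hw'iff.2 hL)


/-- The subgroup generated by the images of the `Sb i`. -/
def HHP (φ : ∀ i, H →* G i) (Sb : ∀ i, Subgroup (G i)) : Subgroup (PushoutI φ) :=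
  Subgroup.closure (⋃ i, (PushoutI.of (φ := φ) i) '' (Sb i : Set (G i)))

section Theta

variable (φ Sb)

/-- The restricted diagram. -/
def psiMap (hSb : ∀ i, (φ i).range ≤ Sb i) : ∀ i, H →* (Sb i) := fun i =>
  (φ i).codRestrict (Sb i) (fun c => hSb i ⟨c, rfl⟩)

variable (hSb : ∀ i, (φ i).range ≤ Sb i) in
/-- The comparison map from the pushout of the subgroups. -/
def theta : PushoutI (psiMap φ Sb hSb) →* PushoutI φ :=
  PushoutI.lift (fun i => (PushoutI.of (φ := φ) i).comp (Sb i).subtype) (PushoutI.base φ)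
    (by
      intro i
      ext c
      simp [psiMap, PushoutI.of_apply_eq_base])

variable (hSb : ∀ i, (φ i).range ≤ Sb i) in
theorem psiMap_injective (hφ : ∀ i, Injective (φ i)) : ∀ i, Injective (psiMap φ Sb hSb i) := by
  intro i a b hab
  apply hφ i
  have := congrArg (Subtype.val) hab
  simpa [psiMap] using this

/-- Map a word in the subgroups to a word in the ambient groups. -/
def mapWord (V : Word (fun i => ↥(Sb i))) : Word G where
  toList := V.toList.map (fun l => ⟨l.1, (l.2 : G l.1)⟩)
  ne_one := by
    intro l hl
    obtain ⟨l', hl', rfl⟩ := List.mem_map.1 hl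
    have := V.ne_one l' hl'
    simpa using this
  chain_ne := by
    refine List.isChain_map_of_isChain _ ?_ V.chain_ne
    intro a b h
    simpa using h

theorem mapWord_prod (hSb : ∀ i, (φ i).range ≤ Sb i) (V : Word (fun i => ↥(Sb i))) :
    (ofCoprodI ((mapWord Sb V).prod) : PushoutI φ)
      = theta φ Sb hSb (ofCoprodI V.prod) := by
  rw [ofCoprodI_word_prod, ofCoprodI_word_prod, map_list_prod]
  unfold mapWord
  simp only [List.map_map]
  exact congrArg List.prod (List.map_congr_left (fun l _ => by
    simp [Function.comp, theta]))

theorem exists_rep (hSb : ∀ i, (φ i).range ≤ Sb i) {h : PushoutI φ}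
    (hφ : ∀ i, Injective (φ i)) (hh : h ∈ HHP φ Sb) [Nonempty ι] :
    ∃ (κ : H) (W : Word G), Reduced φ W ∧ SLet Sb W ∧
      h = PushoutI.base φ κ * ofCoprodI W.prod := by
  classical
  -- h is in the range of theta
  have hrange : h ∈ (theta φ Sb hSb).range := by
    refine Subgroup.closure_le (K := (theta φ Sb hSb).range) |>.2 ?_ hh
    rintro _ ⟨s, ⟨i, rfl⟩, ⟨a, ha, rfl⟩⟩
    exact ⟨PushoutI.of (φ := psiMap φ Sb hSb) i ⟨a, ha⟩, by simp [theta]⟩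
  obtain ⟨m, rfl⟩ := hrange
  obtain ⟨d''⟩ := NormalWord.transversal_nonempty (psiMap φ Sb hSb)
    (psiMap_injective φ Sb hSb hφ)
  set w : NormalWord d'' := m • NormalWord.empty with hw
  have hwprod : w.prod = m := by
    rw [hw, NormalWord.prod_smul, NormalWord.prod_empty, mul_one]
  have hm : m = PushoutI.base (psiMap φ Sb hSb) w.head * ofCoprodI w.toWord.prod := by
    rw [← hwprod]; rfl
  refine ⟨w.head, mapWord Sb w.toWord, ?_, ?_, ?_⟩
  · -- reduced
    intro l hl
    obtain ⟨l', hl', rfl⟩ := List.mem_map.1 hl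
    rintro ⟨c, hc⟩
    have hne : l'.2 ≠ 1 := w.toWord.ne_one l' hl'
    have hset : l'.2 ∈ d''.set l'.1 := w.normalized l'.1 l'.2 (by
      exact hl')
    have hrange : l'.2 ∈ ((psiMap φ Sb hSb l'.1).range : Set (Sb l'.1)) := by
      refine ⟨c, ?_⟩
      apply Subtype.ext
      simpa [psiMap] using hc
    have hinj := (d''.compl l'.1).1
    have h1 : ((⟨l'.2, hrange⟩ : ((psiMap φ Sb hSb l'.1).range : Set (Sb l'.1))) ,
        (⟨1, d''.one_mem l'.1⟩ : (d''.set l'.1))) =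
        ((⟨1, Subgroup.one_mem _⟩ : ((psiMap φ Sb hSb l'.1).range : Set (Sb l'.1))),
        (⟨l'.2, hset⟩ : (d''.set l'.1))) := by
      apply hinj
      simp
    have := congrArg (fun p => (p.2 : Sb l'.1)) h1
    simp only at this
    exact hne this.symm
  · -- letters in Sb
    intro i g hg
    obtain ⟨l', hl', hEq⟩ := List.mem_map.1 hg
    rcases Sigma.mk.inj_iff.1 hEq.symm with ⟨rfl, h2⟩
    rw [eq_of_heq h2]
    exact (l'.2).2
  · rw [hm, map_mul, mapWord_prod φ Sb hSb]
    congr 1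

end Theta

theorem mem_HHP_reduced_iff (hφ : ∀ i, Injective (φ i)) (hSb : ∀ i, (φ i).range ≤ Sb i)
    [Nonempty ι] {W : Word G} (hW : Reduced φ W) :
    (ofCoprodI W.prod : PushoutI φ) ∈ HHP φ Sb ↔ SLet Sb W := by
  classical
  constructor
  · intro hh
    obtain ⟨d, hd⟩ := exists_adapted_transversal hφ Sb
    obtain ⟨κ, W₀, hred₀, hslet₀, heq⟩ := exists_rep φ Sb hSb hφ hh
    obtain ⟨w₀', hprod₀, _, hiff₀⟩ := exists_normalWord_adapted hSb d hd hred₀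
    obtain ⟨w', hprod, _, hiff⟩ := exists_normalWord_adapted hSb d hd hW
    have : (κ • w₀').prod = w'.prod := by
      rw [NormalWord.prod_base_smul, hprod₀, hprod, ← heq]
    have hww : w' = κ • w₀' := NormalWord.prod_injective this.symm
    have hlist : w'.toList = w₀'.toList := by rw [hww]; rfl
    refine hiff.1 ?_
    rw [hlist]
    exact hiff₀.2 hslet₀
  · exact sLet_prod_mem

theorem of_mem_HHP (hφ : ∀ i, Injective (φ i)) (hSb : ∀ i, (φ i).range ≤ Sb i)
    [Nonempty ι] {i : ι} {a : G i} (ha : PushoutI.of (φ := φ) i a ∈ HHP φ Sb) :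
    a ∈ Sb i := by
  by_cases har : a ∈ (φ i).range
  · exact hSb i har
  · have ha1 : a ≠ 1 := fun h => har (h ▸ Subgroup.one_mem _)
    set W : Word G := ⟨[⟨i, a⟩], by simpa using ha1, List.isChain_singleton _⟩ with hW
    have hred : Reduced φ W := by
      intro l hl
      rw [hW] at hl
      simp only [List.mem_singleton] at hl
      subst hl
      exact har
    have hprod : (ofCoprodI W.prod : PushoutI φ) = PushoutI.of (φ := φ) i a := by
      rw [ofCoprodI_word_prod]
      simp [hW]
    have := (mem_HHP_reduced_iff hφ hSb hred).1 (by rw [hprod]; exact ha)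
    exact this i a (by simp [hW])


/-! ### Word surgery: tails and inverses -/

theorem of_mem_HHP_gen {i : ι} {a : G i} (ha : a ∈ Sb i) :
    PushoutI.of (φ := φ) i a ∈ HHP φ Sb :=
  Subgroup.subset_closure (Set.mem_iUnion.2 ⟨i, ⟨a, ha, rfl⟩⟩)

/-- The tail of a word. -/
def wTail (W : Word G) : Word G where
  toList := W.toList.tail
  ne_one := fun l hl => W.ne_one l (List.mem_of_mem_tail hl)
  chain_ne := W.chain_ne.tail

theorem wTail_reduced {W : Word G} (h : Reduced φ W) : Reduced φ (wTail W) :=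
  fun l hl => h l (List.mem_of_mem_tail hl)

theorem wTail_sLet {W : Word G} (h : SLet Sb W) : SLet Sb (wTail W) :=
  fun i g hg => h i g (List.mem_of_mem_tail hg)

theorem prod_eq_head_mul_tail {W : Word G} {i : ι} {g : G i} {t : List (Σ i, G i)}
    (hL : W.toList = ⟨i, g⟩ :: t) :
    (ofCoprodI W.prod : PushoutI φ)
      = PushoutI.of (φ := φ) i g * ofCoprodI (wTail W).prod := by
  rw [ofCoprodI_word_prod, ofCoprodI_word_prod]
  unfold wTail
  simp [hL]

/-- The inverse of a word. -/
def wInv (W : Word G) : Word G where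
  toList := (W.toList.map fun l => (⟨l.1, l.2⁻¹⟩ : Σ i, G i)).reverse
  ne_one := by
    intro l hl
    rw [List.mem_reverse] at hl
    obtain ⟨l', hl', rfl⟩ := List.mem_map.1 hl
    have := W.ne_one l' hl'
    simpa using this
  chain_ne := by
    rw [List.isChain_reverse]
    refine List.isChain_map_of_isChain _ ?_ W.chain_ne
    intro a b h
    exact Ne.symm h

theorem wInv_toList (W : Word G) :
    (wInv W).toList = (W.toList.map fun l => (⟨l.1, l.2⁻¹⟩ : Σ i, G i)).reverse := rfl

theorem wInv_length (W : Word G) : (wInv W).toList.length = W.toList.length := by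
  simp [wInv]

theorem wInv_prod (W : Word G) :
    (ofCoprodI (wInv W).prod : PushoutI φ) = (ofCoprodI W.prod)⁻¹ := by
  rw [ofCoprodI_word_prod, ofCoprodI_word_prod, List.prod_inv_reverse]
  unfold wInv
  rw [List.map_reverse, List.map_map, List.map_map]
  refine congrArg List.prod (congrArg List.reverse ?_)
  refine List.map_congr_left (fun l _ => ?_)
  simp [Function.comp]

theorem wInv_reduced {W : Word G} (h : Reduced φ W) : Reduced φ (wInv W) := by
  intro l hl
  rw [wInv_toList, List.mem_reverse] at hl
  obtain ⟨l', hl', rfl⟩ := List.mem_map.1 hl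
  have := h l' hl'
  simpa using this

theorem wInv_sLet {W : Word G} (h : SLet Sb W) : SLet Sb (wInv W) := by
  intro i g hg
  rw [wInv_toList, List.mem_reverse] at hg
  obtain ⟨l', hl', hEq⟩ := List.mem_map.1 hg
  rcases Sigma.mk.inj_iff.1 hEq.symm with ⟨rfl, h2⟩
  rw [eq_of_heq h2]
  exact (Sb l'.1).inv_mem (h l'.1 l'.2 hl')

theorem wInv_cons_toList {i : ι} (m : G i) (W : Word G) (h1 : W.fstIdx ≠ some i) (h2 : m ≠ 1) :
    (wInv (Word.cons m W h1 h2)).toList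
      = (wInv W).toList ++ [(⟨i, m⁻¹⟩ : Σ i, G i)] := by
  simp [wInv, Word.cons]

theorem reduced_cons {i : ι} {m : G i} {W : Word G} {h1 : W.fstIdx ≠ some i} {h2 : m ≠ 1}
    (hm : m ∉ (φ i).range) (hW : Reduced φ W) : Reduced φ (Word.cons m W h1 h2) := by
  intro l hl
  rcases List.mem_cons.1 hl with hl | hl
  · subst hl; exact hm
  · exact hW l hl

theorem ofCoprodI_cons_prod {i : ι} (m : G i) (W : Word G) (h1 : W.fstIdx ≠ some i)
    (h2 : m ≠ 1) :
    (ofCoprodI (Word.cons m W h1 h2).prod : PushoutI φ)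
      = PushoutI.of (φ := φ) i m * ofCoprodI W.prod := by
  rw [Word.prod_cons, map_mul, ofCoprodI_of]

/-! ### The key double-coset lemma -/

theorem star_aux (hφ : ∀ i, Injective (φ i)) (hSb : ∀ i, (φ i).range ≤ Sb i) [Nonempty ι]
    {i : ι} : ∀ (n : ℕ) (W : Word G), W.toList.length ≤ n → Reduced φ W → SLet Sb W →
    ∀ e f : G i,
      PushoutI.of (φ := φ) i e * ofCoprodI W.prod * PushoutI.of (φ := φ) i f ∈ HHP φ Sb →
      ∃ σ ∈ Sb i, e * σ * f ∈ Sb i := by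
  have hnil : ∀ (W : Word G), W.toList = [] → ∀ e f : G i,
      PushoutI.of (φ := φ) i e * ofCoprodI W.prod * PushoutI.of (φ := φ) i f ∈ HHP φ Sb →
      ∃ σ ∈ Sb i, e * σ * f ∈ Sb i := by
    intro W hW e f hδ
    have hW1 : (ofCoprodI W.prod : PushoutI φ) = 1 := by
      rw [ofCoprodI_word_prod]; simp [hW]
    rw [hW1, mul_one, ← map_mul] at hδ
    exact ⟨1, Subgroup.one_mem _, by simpa using of_mem_HHP hφ hSb hδ⟩
  intro n
  induction n with
  | zero =>
    intro W hlen _ _ e f hδ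
    exact hnil W (List.length_eq_zero_iff.1 (Nat.le_zero.1 hlen)) e f hδ
  | succ n ih =>
    intro W hlen hred hslet e f hδ
    cases hL : W.toList with
    | nil => exact hnil W hL e f hδ
    | cons hd t =>
      obtain ⟨j, g₀⟩ := hd
      have hlent : t.length ≤ n := by
        have := hlen; rw [hL] at this; simpa using this
      by_cases hji : j = i
      · subst hji
        have hg₀ : g₀ ∈ Sb j := hslet j g₀ (by rw [hL]; exact List.mem_cons_self)
        have hpeel := prod_eq_head_mul_tail (φ := φ) hL
        have heq : PushoutI.of (φ := φ) j (e * g₀) * ofCoprodI (wTail W).prod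
              * PushoutI.of (φ := φ) j f
            = PushoutI.of (φ := φ) j e * ofCoprodI W.prod * PushoutI.of (φ := φ) j f := by
          rw [map_mul, hpeel]; group
        have hδ' : PushoutI.of (φ := φ) j (e * g₀) * ofCoprodI (wTail W).prod
            * PushoutI.of (φ := φ) j f ∈ HHP φ Sb := by rw [heq]; exact hδ
        obtain ⟨σ, hσ, hσ2⟩ := ih (wTail W) (by simpa [wTail, hL] using hlent)
          (wTail_reduced hred) (wTail_sLet hslet) (e * g₀) f hδ'
        exact ⟨g₀ * σ, mul_mem hg₀ hσ, by
          have : e * (g₀ * σ) * f = e * g₀ * σ * f := by group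
          rw [this]; exact hσ2⟩
      · by_cases he : e ∈ (φ i).range
        · have hWmem : (ofCoprodI W.prod : PushoutI φ) ∈ HHP φ Sb := sLet_prod_mem hslet
          have hemem : PushoutI.of (φ := φ) i e ∈ HHP φ Sb := of_mem_HHP_gen (hSb i he)
          have hfmem : PushoutI.of (φ := φ) i f ∈ HHP φ Sb := by
            have hrw : PushoutI.of (φ := φ) i f
                = (ofCoprodI W.prod)⁻¹ * (PushoutI.of (φ := φ) i e)⁻¹
                  * (PushoutI.of (φ := φ) i e * ofCoprodI W.prod * PushoutI.of (φ := φ) i f) := by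
              group
            rw [hrw]
            exact mul_mem (mul_mem (inv_mem hWmem) (inv_mem hemem)) hδ
          refine ⟨1, Subgroup.one_mem _, ?_⟩
          have : e * 1 * f = e * f := by group
          rw [this]
          exact mul_mem (hSb i he) (of_mem_HHP hφ hSb hfmem)
        · by_cases hf : f ∈ (φ i).range
          · have hWmem : (ofCoprodI W.prod : PushoutI φ) ∈ HHP φ Sb := sLet_prod_mem hslet
            have hfmem : PushoutI.of (φ := φ) i f ∈ HHP φ Sb := of_mem_HHP_gen (hSb i hf)
            have hemem : PushoutI.of (φ := φ) i e ∈ HHP φ Sb := by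
              have hrw : PushoutI.of (φ := φ) i e
                  = (PushoutI.of (φ := φ) i e * ofCoprodI W.prod * PushoutI.of (φ := φ) i f)
                    * (PushoutI.of (φ := φ) i f)⁻¹ * (ofCoprodI W.prod)⁻¹ := by
                group
              rw [hrw]
              exact mul_mem (mul_mem hδ (inv_mem hfmem)) (inv_mem hWmem)
            refine ⟨1, Subgroup.one_mem _, ?_⟩
            have : e * 1 * f = e * f := by group
            rw [this]
            exact mul_mem (of_mem_HHP hφ hSb hemem) (hSb i hf)
          · -- both `e` and `f` are not in the image of the base group
            have he1 : e ≠ 1 := fun h => he (h ▸ Subgroup.one_mem _)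
            have hf1 : f ≠ 1 := fun h => hf (h ▸ Subgroup.one_mem _)
            cases hL' : (wInv W).toList with
            | nil =>
              exfalso
              have := wInv_length W
              rw [hL', hL] at this
              simp at this
            | cons hd₁ t₁ =>
              obtain ⟨j₁, g₁⟩ := hd₁
              have hlen₁ : t₁.length ≤ n := by
                have h1 := wInv_length W
                rw [hL', hL] at h1
                simp only [List.length_cons] at h1
                omega
              by_cases hj₁ : j₁ = i
              · subst hj₁
                have hred' := wInv_reduced (φ := φ) hred
                have hslet' := wInv_sLet (Sb := Sb) hslet
                have hg₁ : g₁ ∈ Sb j₁ := hslet' j₁ g₁ (by rw [hL']; exact List.mem_cons_self)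
                have hpeel := prod_eq_head_mul_tail (φ := φ) hL'
                have hδinv : PushoutI.of (φ := φ) j₁ f⁻¹ * ofCoprodI (wInv W).prod
                    * PushoutI.of (φ := φ) j₁ e⁻¹ ∈ HHP φ Sb := by
                  have hrw : PushoutI.of (φ := φ) j₁ f⁻¹ * ofCoprodI (wInv W).prod
                      * PushoutI.of (φ := φ) j₁ e⁻¹
                      = (PushoutI.of (φ := φ) j₁ e * ofCoprodI W.prod
                          * PushoutI.of (φ := φ) j₁ f)⁻¹ := by
                    rw [wInv_prod, map_inv, map_inv]
                    group
                  rw [hrw]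
                  exact inv_mem hδ
                have heq : PushoutI.of (φ := φ) j₁ (f⁻¹ * g₁) * ofCoprodI (wTail (wInv W)).prod
                      * PushoutI.of (φ := φ) j₁ e⁻¹
                    = PushoutI.of (φ := φ) j₁ f⁻¹ * ofCoprodI (wInv W).prod
                      * PushoutI.of (φ := φ) j₁ e⁻¹ := by
                  rw [map_mul, hpeel]; group
                have hδ' : PushoutI.of (φ := φ) j₁ (f⁻¹ * g₁) * ofCoprodI (wTail (wInv W)).prod
                    * PushoutI.of (φ := φ) j₁ e⁻¹ ∈ HHP φ Sb := by rw [heq]; exact hδinv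
                obtain ⟨σ, hσ, hσ2⟩ := ih (wTail (wInv W)) (by simpa [wTail, hL'] using hlen₁)
                  (wTail_reduced hred') (wTail_sLet hslet') (f⁻¹ * g₁) e⁻¹ hδ'
                refine ⟨σ⁻¹ * g₁⁻¹, mul_mem (inv_mem hσ) (inv_mem hg₁), ?_⟩
                have : e * (σ⁻¹ * g₁⁻¹) * f = (f⁻¹ * g₁ * σ * e⁻¹)⁻¹ := by group
                rw [this]
                exact inv_mem hσ2
              · -- head and last letters of `W` both avoid the index `i`
                have hfstW : W.fstIdx ≠ some i := by
                  rw [Word.fstIdx, hL]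
                  simp [hji]
                have hU₁red : Reduced φ (Word.cons e W hfstW he1) := reduced_cons he hred
                have hfst'' : (wInv (Word.cons e W hfstW he1)).fstIdx ≠ some i := by
                  rw [Word.fstIdx, wInv_cons_toList, hL']
                  simp [hj₁]
                have hfinv1 : f⁻¹ ≠ 1 := fun h => hf1 (by simpa using congrArg (·⁻¹) h)
                have hVred : Reduced φ (Word.cons f⁻¹ (wInv (Word.cons e W hfstW he1))
                    hfst'' hfinv1) := by
                  refine reduced_cons ?_ (wInv_reduced hU₁red)
                  intro hmem
                  exact hf (by simpa using (φ i).range.inv_mem hmem)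
                have hVprod : (ofCoprodI (Word.cons f⁻¹ (wInv (Word.cons e W hfstW he1))
                      hfst'' hfinv1).prod : PushoutI φ)
                    = (PushoutI.of (φ := φ) i e * ofCoprodI W.prod
                        * PushoutI.of (φ := φ) i f)⁻¹ := by
                  rw [ofCoprodI_cons_prod, wInv_prod, ofCoprodI_cons_prod, map_inv]
                  group
                have hVmem : (ofCoprodI (Word.cons f⁻¹ (wInv (Word.cons e W hfstW he1))
                    hfst'' hfinv1).prod : PushoutI φ) ∈ HHP φ Sb := by
                  rw [hVprod]; exact inv_mem hδ
                have hVslet := (mem_HHP_reduced_iff hφ hSb hVred).1 hVmem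
                have hfS : f⁻¹ ∈ Sb i := hVslet i f⁻¹ (List.mem_cons_self)
                have heS : e⁻¹ ∈ Sb i := by
                  refine hVslet i e⁻¹ ?_
                  refine List.mem_cons_of_mem _ ?_
                  rw [wInv_cons_toList]
                  exact List.mem_append_right _ (List.mem_singleton_self _)
                refine ⟨1, Subgroup.one_mem _, ?_⟩
                have : e * 1 * f = e * f := by group
                rw [this]
                exact mul_mem (by simpa using (Sb i).inv_mem heS)
                  (by simpa using (Sb i).inv_mem hfS)

theorem star (hφ : ∀ i, Injective (φ i)) (hSb : ∀ i, (φ i).range ≤ Sb i) [Nonempty ι]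
    {i : ι} {e f : G i} {h₂ : PushoutI φ} (hh₂ : h₂ ∈ HHP φ Sb)
    (hδ : PushoutI.of (φ := φ) i e * h₂ * PushoutI.of (φ := φ) i f ∈ HHP φ Sb) :
    ∃ σ ∈ Sb i, e * σ * f ∈ Sb i := by
  obtain ⟨κ, W, hred, hslet, rfl⟩ := exists_rep φ Sb hSb hφ hh₂
  have heq : PushoutI.of (φ := φ) i (e * φ i κ) * ofCoprodI W.prod * PushoutI.of (φ := φ) i f
      = PushoutI.of (φ := φ) i e * (PushoutI.base φ κ * ofCoprodI W.prod)
        * PushoutI.of (φ := φ) i f := by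
    rw [map_mul, PushoutI.of_apply_eq_base]; group
  have hδ' : PushoutI.of (φ := φ) i (e * φ i κ) * ofCoprodI W.prod
      * PushoutI.of (φ := φ) i f ∈ HHP φ Sb := by rw [heq]; exact hδ
  obtain ⟨σ, hσ, hσ2⟩ := star_aux hφ hSb W.toList.length W le_rfl hred hslet (e * φ i κ) f hδ'
  refine ⟨φ i κ * σ, mul_mem (hSb i ⟨κ, rfl⟩) hσ, ?_⟩
  have : e * (φ i κ * σ) * f = e * φ i κ * σ * f := by group
  rw [this]
  exact hσ2


theorem reduced_empty : Reduced φ (Word.empty : Word G) := by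
  intro l hl
  simp [Word.empty] at hl

theorem star_mixed_aux (hφ : ∀ i, Injective (φ i)) (hSb : ∀ i, (φ i).range ≤ Sb i) [Nonempty ι] :
    ∀ (n : ℕ) (i j : ι), i ≠ j → ∀ (W : Word G), W.toList.length ≤ n → Reduced φ W →
      SLet Sb W → ∀ (e : G i) (f : G j),
      PushoutI.of (φ := φ) i e * ofCoprodI W.prod * PushoutI.of (φ := φ) j f ∈ HHP φ Sb →
      e ∈ Sb i ∧ f ∈ Sb j := by
  have hnil : ∀ (i j : ι), i ≠ j → ∀ (W : Word G), W.toList = [] → ∀ (e : G i) (f : G j),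
      PushoutI.of (φ := φ) i e * ofCoprodI W.prod * PushoutI.of (φ := φ) j f ∈ HHP φ Sb →
      e ∈ Sb i ∧ f ∈ Sb j := by
    intro i j hij W hW e f hδ
    have hW1 : (ofCoprodI W.prod : PushoutI φ) = 1 := by
      rw [ofCoprodI_word_prod]; simp [hW]
    rw [hW1, mul_one] at hδ
    by_cases he : e ∈ (φ i).range
    · obtain ⟨c, rfl⟩ := he
      have h1 : PushoutI.of (φ := φ) i (φ i c) = PushoutI.of (φ := φ) j (φ j c) := by
        rw [PushoutI.of_apply_eq_base, PushoutI.of_apply_eq_base]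
      rw [h1, ← map_mul] at hδ
      have hf : φ j c * f ∈ Sb j := of_mem_HHP hφ hSb hδ
      refine ⟨hSb i ⟨c, rfl⟩, ?_⟩
      have := mul_mem ((Sb j).inv_mem (hSb j ⟨c, rfl⟩)) hf
      simpa using this
    · by_cases hf : f ∈ (φ j).range
      · obtain ⟨c, rfl⟩ := hf
        have h1 : PushoutI.of (φ := φ) j (φ j c) = PushoutI.of (φ := φ) i (φ i c) := by
          rw [PushoutI.of_apply_eq_base, PushoutI.of_apply_eq_base]
        rw [h1, ← map_mul] at hδ
        have he' : e * φ i c ∈ Sb i := of_mem_HHP hφ hSb hδ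
        refine ⟨?_, hSb j ⟨c, rfl⟩⟩
        have := mul_mem he' ((Sb i).inv_mem (hSb i ⟨c, rfl⟩))
        simpa using this
      · have he1 : e ≠ 1 := fun h => he (h ▸ Subgroup.one_mem _)
        have hf1 : f ≠ 1 := fun h => hf (h ▸ Subgroup.one_mem _)
        have hfst0 : (Word.empty : Word G).fstIdx ≠ some j := by
          simp [Word.empty, Word.fstIdx]
        have hfst1 : (Word.cons f Word.empty hfst0 hf1).fstIdx ≠ some i := by
          rw [Word.fstIdx_cons]
          simp [Ne.symm hij]
        have hVred : Reduced φ (Word.cons e (Word.cons f Word.empty hfst0 hf1) hfst1 he1) :=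
          reduced_cons he (reduced_cons hf reduced_empty)
        have hVprod : (ofCoprodI (Word.cons e (Word.cons f Word.empty hfst0 hf1)
              hfst1 he1).prod : PushoutI φ)
            = PushoutI.of (φ := φ) i e * PushoutI.of (φ := φ) j f := by
          rw [ofCoprodI_cons_prod, ofCoprodI_cons_prod]
          simp [Word.prod_empty]
        have hVslet := (mem_HHP_reduced_iff hφ hSb hVred).1 (by rw [hVprod]; exact hδ)
        exact ⟨hVslet i e (List.mem_cons_self),
          hVslet j f (List.mem_cons_of_mem _ (List.mem_cons_self))⟩
  intro n
  induction n with
  | zero =>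
    intro i j hij W hlen _ _ e f hδ
    exact hnil i j hij W (List.length_eq_zero_iff.1 (Nat.le_zero.1 hlen)) e f hδ
  | succ n ih =>
    intro i j hij W hlen hred hslet e f hδ
    cases hL : W.toList with
    | nil => exact hnil i j hij W hL e f hδ
    | cons hd t =>
      obtain ⟨k, g₀⟩ := hd
      have hlent : t.length ≤ n := by
        have := hlen; rw [hL] at this; simpa using this
      by_cases hki : k = i
      · subst hki
        have hg₀ : g₀ ∈ Sb k := hslet k g₀ (by rw [hL]; exact List.mem_cons_self)
        have hpeel := prod_eq_head_mul_tail (φ := φ) hL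
        have heq : PushoutI.of (φ := φ) k (e * g₀) * ofCoprodI (wTail W).prod
              * PushoutI.of (φ := φ) j f
            = PushoutI.of (φ := φ) k e * ofCoprodI W.prod * PushoutI.of (φ := φ) j f := by
          rw [map_mul, hpeel]; group
        have hδ' : PushoutI.of (φ := φ) k (e * g₀) * ofCoprodI (wTail W).prod
            * PushoutI.of (φ := φ) j f ∈ HHP φ Sb := by rw [heq]; exact hδ
        obtain ⟨h1, h2⟩ := ih k j hij (wTail W) (by simpa [wTail, hL] using hlent)
          (wTail_reduced hred) (wTail_sLet hslet) (e * g₀) f hδ'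
        refine ⟨?_, h2⟩
        have := mul_mem h1 ((Sb k).inv_mem hg₀)
        simpa using this
      · by_cases he : e ∈ (φ i).range
        · have hWmem : (ofCoprodI W.prod : PushoutI φ) ∈ HHP φ Sb := sLet_prod_mem hslet
          have hemem : PushoutI.of (φ := φ) i e ∈ HHP φ Sb := of_mem_HHP_gen (hSb i he)
          have hfmem : PushoutI.of (φ := φ) j f ∈ HHP φ Sb := by
            have hrw : PushoutI.of (φ := φ) j f
                = (ofCoprodI W.prod)⁻¹ * (PushoutI.of (φ := φ) i e)⁻¹
                  * (PushoutI.of (φ := φ) i e * ofCoprodI W.prod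
                    * PushoutI.of (φ := φ) j f) := by group
            rw [hrw]
            exact mul_mem (mul_mem (inv_mem hWmem) (inv_mem hemem)) hδ
          exact ⟨hSb i he, of_mem_HHP hφ hSb hfmem⟩
        · by_cases hf : f ∈ (φ j).range
          · have hWmem : (ofCoprodI W.prod : PushoutI φ) ∈ HHP φ Sb := sLet_prod_mem hslet
            have hfmem : PushoutI.of (φ := φ) j f ∈ HHP φ Sb := of_mem_HHP_gen (hSb j hf)
            have hemem : PushoutI.of (φ := φ) i e ∈ HHP φ Sb := by
              have hrw : PushoutI.of (φ := φ) i e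
                  = (PushoutI.of (φ := φ) i e * ofCoprodI W.prod * PushoutI.of (φ := φ) j f)
                    * (PushoutI.of (φ := φ) j f)⁻¹ * (ofCoprodI W.prod)⁻¹ := by group
              rw [hrw]
              exact mul_mem (mul_mem hδ (inv_mem hfmem)) (inv_mem hWmem)
            exact ⟨of_mem_HHP hφ hSb hemem, hSb j hf⟩
          · have he1 : e ≠ 1 := fun h => he (h ▸ Subgroup.one_mem _)
            have hf1 : f ≠ 1 := fun h => hf (h ▸ Subgroup.one_mem _)
            cases hL' : (wInv W).toList with
            | nil =>
              exfalso
              have := wInv_length W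
              rw [hL', hL] at this
              simp at this
            | cons hd₁ t₁ =>
              obtain ⟨k₁, g₁⟩ := hd₁
              have hlen₁ : t₁.length ≤ n := by
                have h1 := wInv_length W
                rw [hL', hL] at h1
                simp only [List.length_cons] at h1
                omega
              have hδinv : PushoutI.of (φ := φ) j f⁻¹ * ofCoprodI (wInv W).prod
                  * PushoutI.of (φ := φ) i e⁻¹ ∈ HHP φ Sb := by
                have hrw : PushoutI.of (φ := φ) j f⁻¹ * ofCoprodI (wInv W).prod
                    * PushoutI.of (φ := φ) i e⁻¹
                    = (PushoutI.of (φ := φ) i e * ofCoprodI W.prod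
                        * PushoutI.of (φ := φ) j f)⁻¹ := by
                  rw [wInv_prod, map_inv, map_inv]
                  group
                rw [hrw]
                exact inv_mem hδ
              have hred' := wInv_reduced (φ := φ) hred
              have hslet' := wInv_sLet (Sb := Sb) hslet
              by_cases hk₁ : k₁ = j
              · subst hk₁
                have hg₁ : g₁ ∈ Sb k₁ := hslet' k₁ g₁ (by
                  rw [hL']; exact List.mem_cons_self)
                have hpeel := prod_eq_head_mul_tail (φ := φ) hL'
                have heq : PushoutI.of (φ := φ) k₁ (f⁻¹ * g₁) * ofCoprodI (wTail (wInv W)).prod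
                      * PushoutI.of (φ := φ) i e⁻¹
                    = PushoutI.of (φ := φ) k₁ f⁻¹ * ofCoprodI (wInv W).prod
                      * PushoutI.of (φ := φ) i e⁻¹ := by
                  rw [map_mul, hpeel]; group
                have hδ' : PushoutI.of (φ := φ) k₁ (f⁻¹ * g₁) * ofCoprodI (wTail (wInv W)).prod
                    * PushoutI.of (φ := φ) i e⁻¹ ∈ HHP φ Sb := by rw [heq]; exact hδinv
                obtain ⟨h1, h2⟩ := ih k₁ i (Ne.symm hij) (wTail (wInv W))
                  (by simpa [wTail, hL'] using hlen₁)
                  (wTail_reduced hred') (wTail_sLet hslet') (f⁻¹ * g₁) e⁻¹ hδ'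
                constructor
                · have := (Sb i).inv_mem h2
                  simpa using this
                · have := (Sb k₁).inv_mem (mul_mem h1 ((Sb k₁).inv_mem hg₁))
                  simpa using this
              · have hfstW : W.fstIdx ≠ some i := by
                  rw [Word.fstIdx, hL]
                  simp [hki]
                have hfst'' : (wInv (Word.cons e W hfstW he1)).fstIdx ≠ some j := by
                  rw [Word.fstIdx, wInv_cons_toList, hL']
                  simp [hk₁]
                have hfinv1 : f⁻¹ ≠ 1 := fun h => hf1 (by simpa using congrArg (·⁻¹) h)
                have hVred : Reduced φ (Word.cons f⁻¹ (wInv (Word.cons e W hfstW he1))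
                    hfst'' hfinv1) := by
                  refine reduced_cons ?_ (wInv_reduced (reduced_cons he hred))
                  intro hmem
                  exact hf (by simpa using (φ j).range.inv_mem hmem)
                have hVprod : (ofCoprodI (Word.cons f⁻¹ (wInv (Word.cons e W hfstW he1))
                      hfst'' hfinv1).prod : PushoutI φ)
                    = (PushoutI.of (φ := φ) i e * ofCoprodI W.prod
                        * PushoutI.of (φ := φ) j f)⁻¹ := by
                  rw [ofCoprodI_cons_prod, wInv_prod, ofCoprodI_cons_prod, map_inv]
                  group
                have hVmem : (ofCoprodI (Word.cons f⁻¹ (wInv (Word.cons e W hfstW he1))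
                    hfst'' hfinv1).prod : PushoutI φ) ∈ HHP φ Sb := by
                  rw [hVprod]; exact inv_mem hδ
                have hVslet := (mem_HHP_reduced_iff hφ hSb hVred).1 hVmem
                have hfS : f⁻¹ ∈ Sb j := hVslet j f⁻¹ (List.mem_cons_self)
                have heS : e⁻¹ ∈ Sb i := by
                  refine hVslet i e⁻¹ ?_
                  refine List.mem_cons_of_mem _ ?_
                  rw [wInv_cons_toList]
                  exact List.mem_append_right _ (List.mem_singleton_self _)
                exact ⟨by simpa using (Sb i).inv_mem heS, by simpa using (Sb j).inv_mem hfS⟩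

theorem star_mixed (hφ : ∀ i, Injective (φ i)) (hSb : ∀ i, (φ i).range ≤ Sb i) [Nonempty ι]
    {i j : ι} (hij : i ≠ j) {e : G i} {f : G j} {h₂ : PushoutI φ} (hh₂ : h₂ ∈ HHP φ Sb)
    (hδ : PushoutI.of (φ := φ) i e * h₂ * PushoutI.of (φ := φ) j f ∈ HHP φ Sb) :
    e ∈ Sb i ∧ f ∈ Sb j := by
  obtain ⟨κ, W, hred, hslet, rfl⟩ := exists_rep φ Sb hSb hφ hh₂
  have heq : PushoutI.of (φ := φ) i (e * φ i κ) * ofCoprodI W.prod * PushoutI.of (φ := φ) j f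
      = PushoutI.of (φ := φ) i e * (PushoutI.base φ κ * ofCoprodI W.prod)
        * PushoutI.of (φ := φ) j f := by
    rw [map_mul, PushoutI.of_apply_eq_base]; group
  have hδ' : PushoutI.of (φ := φ) i (e * φ i κ) * ofCoprodI W.prod
      * PushoutI.of (φ := φ) j f ∈ HHP φ Sb := by rw [heq]; exact hδ
  obtain ⟨h1, h2⟩ := star_mixed_aux hφ hSb W.toList.length i j hij W le_rfl hred hslet
    (e * φ i κ) f hδ'
  refine ⟨?_, h2⟩
  have := mul_mem h1 ((Sb i).inv_mem (hSb i ⟨κ, rfl⟩))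
  simpa using this

end Core


section BoolSide

universe uC u₁ u₂

variable {C : Type uC} {G₁ : Type u₁} {G₂ : Type u₂} [Group C] [Group G₁] [Group G₂]

/-- The two-element diagram of groups. -/
def GB (G₁ : Type u₁) (G₂ : Type u₂) : Bool → Type (max u₁ u₂) :=
  fun b => cond b (ULift.{u₂} G₁) (ULift.{u₁} G₂)

instance instGroupGB : ∀ b, Group (GB G₁ G₂ b)
  | true => inferInstanceAs (Group (ULift G₁))
  | false => inferInstanceAs (Group (ULift G₂))

variable (f₁ : C →* G₁) (f₂ : C →* G₂)

/-- The two-element diagram of maps. -/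
def phiB : ∀ b, C →* GB G₁ G₂ b
  | true => (MulEquiv.ulift.symm : G₁ ≃* ULift.{u₂} G₁).toMonoidHom.comp f₁
  | false => (MulEquiv.ulift.symm : G₂ ≃* ULift.{u₁} G₂).toMonoidHom.comp f₂

theorem phiB_injective (hf₁ : Injective f₁) (hf₂ : Injective f₂) :
    ∀ b, Injective (phiB f₁ f₂ b)
  | true => fun a b h => hf₁ (congrArg ULift.down h)
  | false => fun a b h => hf₂ (congrArg ULift.down h)

/-- Comparison map from the amalgamated product to the pushout. -/
def tau : Amal f₁ f₂ →* PushoutI (phiB f₁ f₂) :=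
  QuotientGroup.lift _
    (Coprod.lift
      ((PushoutI.of (φ := phiB f₁ f₂) true).comp
        (MulEquiv.ulift.symm : G₁ ≃* ULift.{u₂} G₁).toMonoidHom)
      ((PushoutI.of (φ := phiB f₁ f₂) false).comp
        (MulEquiv.ulift.symm : G₂ ≃* ULift.{u₁} G₂).toMonoidHom))
    (by
      refine (Subgroup.normalClosure_le_normal ?_)
      rintro x ⟨c, rfl⟩
      simp only [SetLike.mem_coe, MonoidHom.mem_ker, map_mul, map_inv, Coprod.lift_apply_inl,
        Coprod.lift_apply_inr, MonoidHom.coe_comp, comp_apply]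
      have h1 : (PushoutI.of (φ := phiB f₁ f₂) true)
            (MulEquiv.ulift.symm.toMonoidHom (f₁ c)) = PushoutI.base (phiB f₁ f₂) c :=
        PushoutI.of_apply_eq_base (phiB f₁ f₂) true c
      have h2 : (PushoutI.of (φ := phiB f₁ f₂) false)
            (MulEquiv.ulift.symm.toMonoidHom (f₂ c)) = PushoutI.base (phiB f₁ f₂) c :=
        PushoutI.of_apply_eq_base (phiB f₁ f₂) false c
      rw [mul_inv_eq_one]
      exact h1.trans h2.symm)

theorem tau_inl (a : G₁) :
    tau f₁ f₂ (Amal.inl f₁ f₂ a)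
      = PushoutI.of (φ := phiB f₁ f₂) true (ULift.up.{u₂} a) := by
  simp only [tau, Amal.inl, MonoidHom.coe_comp, comp_apply, QuotientGroup.mk'_apply,
    QuotientGroup.lift_mk, Coprod.lift_apply_inl]
  rfl

theorem tau_inr (b : G₂) :
    tau f₁ f₂ (Amal.inr f₁ f₂ b)
      = PushoutI.of (φ := phiB f₁ f₂) false (ULift.up.{u₁} b) := by
  simp only [tau, Amal.inr, MonoidHom.coe_comp, comp_apply, QuotientGroup.mk'_apply,
    QuotientGroup.lift_mk, Coprod.lift_apply_inr]
  rfl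

variable (S₁ : Subgroup G₁) (S₂ : Subgroup G₂)

/-- The two-element diagram of subgroups. -/
def SB : ∀ b, Subgroup (GB G₁ G₂ b)
  | true => S₁.comap (MulEquiv.ulift : ULift.{u₂} G₁ ≃* G₁).toMonoidHom
  | false => S₂.comap (MulEquiv.ulift : ULift.{u₁} G₂ ≃* G₂).toMonoidHom

theorem hSB (hS₁ : f₁.range ≤ S₁) (hS₂ : f₂.range ≤ S₂) :
    ∀ b, (phiB f₁ f₂ b).range ≤ SB S₁ S₂ b := by
  intro b
  cases b
  · rintro x ⟨c, rfl⟩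
    exact hS₂ ⟨c, rfl⟩
  · rintro x ⟨c, rfl⟩
    exact hS₁ ⟨c, rfl⟩

/-- The subgroup of the amalgamated product generated by `S₁` and `S₂`. -/
def HA : Subgroup (Amal f₁ f₂) :=
  Subgroup.closure ((Amal.inl f₁ f₂) '' S₁ ∪ (Amal.inr f₁ f₂) '' S₂)

theorem tau_mem_HHP {h : Amal f₁ f₂} (hh : h ∈ HA f₁ f₂ S₁ S₂) :
    tau f₁ f₂ h ∈ HHP (phiB f₁ f₂) (SB S₁ S₂) := by
  have : HA f₁ f₂ S₁ S₂ ≤ Subgroup.comap (tau f₁ f₂) (HHP (phiB f₁ f₂) (SB S₁ S₂)) := by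
    refine Subgroup.closure_le _ |>.2 ?_
    rintro x (⟨a, ha, rfl⟩ | ⟨b, hb, rfl⟩)
    · show tau f₁ f₂ (Amal.inl f₁ f₂ a) ∈ HHP (phiB f₁ f₂) (SB S₁ S₂)
      rw [tau_inl]
      exact of_mem_HHP_gen (i := true) ha
    · show tau f₁ f₂ (Amal.inr f₁ f₂ b) ∈ HHP (phiB f₁ f₂) (SB S₁ S₂)
      rw [tau_inr]
      exact of_mem_HHP_gen (i := false) hb
  exact this hh

variable {f₁ f₂}

theorem amal_inl_injective (hf₁ : Injective f₁) (hf₂ : Injective f₂) :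
    Injective (Amal.inl f₁ f₂) := by
  intro a b hab
  have := PushoutI.of_injective (phiB_injective f₁ f₂ hf₁ hf₂) true
    (a₁ := ULift.up.{u₂} a) (a₂ := ULift.up.{u₂} b)
    (by rw [← tau_inl, ← tau_inl, hab])
  exact congrArg ULift.down this

theorem amal_inr_injective (hf₁ : Injective f₁) (hf₂ : Injective f₂) :
    Injective (Amal.inr f₁ f₂) := by
  intro a b hab
  have := PushoutI.of_injective (phiB_injective f₁ f₂ hf₁ hf₂) false
    (a₁ := ULift.up.{u₁} a) (a₂ := ULift.up.{u₁} b)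
    (by rw [← tau_inr, ← tau_inr, hab])
  exact congrArg ULift.down this

variable {S₁ S₂}

theorem amal_crux_l (hf₁ : Injective f₁) (hf₂ : Injective f₂)
    (hS₁ : f₁.range ≤ S₁) (hS₂ : f₂.range ≤ S₂) {a : G₁}
    (ha : Amal.inl f₁ f₂ a ∈ HA f₁ f₂ S₁ S₂) : a ∈ S₁ := by
  have := tau_mem_HHP f₁ f₂ S₁ S₂ ha
  rw [tau_inl] at this
  exact of_mem_HHP (phiB_injective f₁ f₂ hf₁ hf₂) (hSB f₁ f₂ S₁ S₂ hS₁ hS₂) (i := true) this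

theorem amal_crux_r (hf₁ : Injective f₁) (hf₂ : Injective f₂)
    (hS₁ : f₁.range ≤ S₁) (hS₂ : f₂.range ≤ S₂) {b : G₂}
    (hb : Amal.inr f₁ f₂ b ∈ HA f₁ f₂ S₁ S₂) : b ∈ S₂ := by
  have := tau_mem_HHP f₁ f₂ S₁ S₂ hb
  rw [tau_inr] at this
  exact of_mem_HHP (phiB_injective f₁ f₂ hf₁ hf₂) (hSB f₁ f₂ S₁ S₂ hS₁ hS₂) (i := false) this

theorem amal_star_l (hf₁ : Injective f₁) (hf₂ : Injective f₂)
    (hS₁ : f₁.range ≤ S₁) (hS₂ : f₂.range ≤ S₂) {e f : G₁} {h₂ : Amal f₁ f₂}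
    (hh₂ : h₂ ∈ HA f₁ f₂ S₁ S₂)
    (hδ : Amal.inl f₁ f₂ e * h₂ * Amal.inl f₁ f₂ f ∈ HA f₁ f₂ S₁ S₂) :
    ∃ σ ∈ S₁, e * σ * f ∈ S₁ := by
  have hδ' := tau_mem_HHP f₁ f₂ S₁ S₂ hδ
  rw [map_mul, map_mul, tau_inl, tau_inl] at hδ'
  obtain ⟨σ, hσ, hσ2⟩ := star (phiB_injective f₁ f₂ hf₁ hf₂)
    (hSB f₁ f₂ S₁ S₂ hS₁ hS₂) (i := true) (tau_mem_HHP f₁ f₂ S₁ S₂ hh₂) hδ'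
  exact ⟨σ.down, hσ, hσ2⟩

theorem amal_star_r (hf₁ : Injective f₁) (hf₂ : Injective f₂)
    (hS₁ : f₁.range ≤ S₁) (hS₂ : f₂.range ≤ S₂) {e f : G₂} {h₂ : Amal f₁ f₂}
    (hh₂ : h₂ ∈ HA f₁ f₂ S₁ S₂)
    (hδ : Amal.inr f₁ f₂ e * h₂ * Amal.inr f₁ f₂ f ∈ HA f₁ f₂ S₁ S₂) :
    ∃ σ ∈ S₂, e * σ * f ∈ S₂ := by
  have hδ' := tau_mem_HHP f₁ f₂ S₁ S₂ hδ
  rw [map_mul, map_mul, tau_inr, tau_inr] at hδ'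
  obtain ⟨σ, hσ, hσ2⟩ := star (phiB_injective f₁ f₂ hf₁ hf₂)
    (hSB f₁ f₂ S₁ S₂ hS₁ hS₂) (i := false) (tau_mem_HHP f₁ f₂ S₁ S₂ hh₂) hδ'
  exact ⟨σ.down, hσ, hσ2⟩


theorem amal_star_mixed_lr (hf₁ : Injective f₁) (hf₂ : Injective f₂)
    (hS₁ : f₁.range ≤ S₁) (hS₂ : f₂.range ≤ S₂) {e : G₁} {f : G₂} {h₂ : Amal f₁ f₂}
    (hh₂ : h₂ ∈ HA f₁ f₂ S₁ S₂)
    (hδ : Amal.inl f₁ f₂ e * h₂ * Amal.inr f₁ f₂ f ∈ HA f₁ f₂ S₁ S₂) :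
    e ∈ S₁ ∧ f ∈ S₂ := by
  have hδ' := tau_mem_HHP f₁ f₂ S₁ S₂ hδ
  rw [map_mul, map_mul, tau_inl, tau_inr] at hδ'
  exact star_mixed (phiB_injective f₁ f₂ hf₁ hf₂) (hSB f₁ f₂ S₁ S₂ hS₁ hS₂)
    (i := true) (j := false) (by simp) (tau_mem_HHP f₁ f₂ S₁ S₂ hh₂) hδ'

theorem amal_star_mixed_rl (hf₁ : Injective f₁) (hf₂ : Injective f₂)
    (hS₁ : f₁.range ≤ S₁) (hS₂ : f₂.range ≤ S₂) {e : G₂} {f : G₁} {h₂ : Amal f₁ f₂}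
    (hh₂ : h₂ ∈ HA f₁ f₂ S₁ S₂)
    (hδ : Amal.inr f₁ f₂ e * h₂ * Amal.inl f₁ f₂ f ∈ HA f₁ f₂ S₁ S₂) :
    e ∈ S₂ ∧ f ∈ S₁ := by
  have hδ' := tau_mem_HHP f₁ f₂ S₁ S₂ hδ
  rw [map_mul, map_mul, tau_inr, tau_inl] at hδ'
  exact star_mixed (phiB_injective f₁ f₂ hf₁ hf₂) (hSB f₁ f₂ S₁ S₂ hS₁ hS₂)
    (i := false) (j := true) (by simp) (tau_mem_HHP f₁ f₂ S₁ S₂ hh₂) hδ'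

end BoolSide

section GraphSide

variable {C G₁ G₂ : Type*} [Group C] [Group G₁] [Group G₂]
  {f₁ : C →* G₁} {f₂ : C →* G₂}
  {VX VY : Type*} [MulAction G₁ VX] [MulAction G₂ VY]

theorem indRelH_equivalence {A G : Type*} [Group A] [Group G] (ι : A →* G) (S : Type*)
    [MulAction A S] : Equivalence (IndRelH ι S) where
  refl p := ⟨1, by simp, by simp⟩
  symm {p q} := fun ⟨a, h1, h2⟩ => ⟨a⁻¹, by rw [h1, map_inv]; group, by rw [h2, inv_smul_smul]⟩
  trans {p q r} := fun ⟨a, h1, h2⟩ ⟨b, h3, h4⟩ =>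
    ⟨b * a, by rw [h1, h3, map_mul]; group, by rw [h4, h2, mul_smul]⟩

theorem indSetH_mk_eq {A G : Type*} [Group A] [Group G] (ι : A →* G) (S : Type*)
    [MulAction A S] {p q : G × S} :
    IndSetH.mk ι S p = IndSetH.mk ι S q ↔ IndRelH ι S p q := by
  constructor
  · intro h
    exact ((indRelH_equivalence ι S).eqvGen_iff).1 (Quot.eq.1 h)
  · exact fun h => Quot.sound h

variable (f₁ f₂) in
/-- The subgroup of `G` generated by the images of the stabilizers of `x` and `y`. -/
def HS (x : VX) (y : VY) : Subgroup (Amal f₁ f₂) :=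
  HA f₁ f₂ (MulAction.stabilizer G₁ x) (MulAction.stabilizer G₂ y)

theorem inl_mem_HS {x : VX} {y : VY} {a : G₁} (ha : a ∈ MulAction.stabilizer G₁ x) :
    Amal.inl f₁ f₂ a ∈ HS f₁ f₂ x y :=
  Subgroup.subset_closure (Or.inl ⟨a, ha, rfl⟩)

theorem inr_mem_HS {x : VX} {y : VY} {b : G₂} (hb : b ∈ MulAction.stabilizer G₂ y) :
    Amal.inr f₁ f₂ b ∈ HS f₁ f₂ x y :=
  Subgroup.subset_closure (Or.inr ⟨b, hb, rfl⟩)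

theorem mkx_eq {x : VX} {y : VY} {g g' : Amal f₁ f₂}
    (h : IndSetH.mk (Amal.inl f₁ f₂) VX (g, x) = IndSetH.mk (Amal.inl f₁ f₂) VX (g', x)) :
    g⁻¹ * g' ∈ HS f₁ f₂ x y := by
  obtain ⟨a, h1, h2⟩ := (indSetH_mk_eq _ _).1 h
  have ha : a ∈ MulAction.stabilizer G₁ x := by
    rw [MulAction.mem_stabilizer_iff]; exact h2.symm
  have h1' : g = g' * Amal.inl f₁ f₂ a := h1
  have : g⁻¹ * g' = Amal.inl f₁ f₂ a⁻¹ := by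
    rw [h1', map_inv]; group
  rw [this]
  exact inl_mem_HS (inv_mem ha)

theorem mky_eq {x : VX} {y : VY} {g g' : Amal f₁ f₂}
    (h : IndSetH.mk (Amal.inr f₁ f₂) VY (g, y) = IndSetH.mk (Amal.inr f₁ f₂) VY (g', y)) :
    g⁻¹ * g' ∈ HS f₁ f₂ x y := by
  obtain ⟨a, h1, h2⟩ := (indSetH_mk_eq _ _).1 h
  have ha : a ∈ MulAction.stabilizer G₂ y := by
    rw [MulAction.mem_stabilizer_iff]; exact h2.symm
  have h1' : g = g' * Amal.inr f₁ f₂ a := h1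
  have : g⁻¹ * g' = Amal.inr f₁ f₂ a⁻¹ := by
    rw [h1', map_inv]; group
  rw [this]
  exact inr_mem_HS (inv_mem ha)

theorem chain3 {x : VX} {y : VY} {g g₂ g₂' g₃ : Amal f₁ f₂}
    (h1 : g⁻¹ * g₂ ∈ HS f₁ f₂ x y) (hm : g₂⁻¹ * g₂' ∈ HS f₁ f₂ x y)
    (h2 : g₂'⁻¹ * g₃ ∈ HS f₁ f₂ x y) : g⁻¹ * g₃ ∈ HS f₁ f₂ x y := by
  have h := mul_mem (mul_mem h1 hm) h2
  rwa [show g⁻¹ * g₂ * (g₂⁻¹ * g₂') * (g₂'⁻¹ * g₃) = g⁻¹ * g₃ by group] at h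

theorem inv_rel {x : VX} {y : VY} {g g' : Amal f₁ f₂} (h : g⁻¹ * g' ∈ HS f₁ f₂ x y) :
    g'⁻¹ * g ∈ HS f₁ f₂ x y := by
  have := inv_mem h
  rwa [mul_inv_rev, inv_inv] at this

variable (f₁ f₂) in
/-- An explicit equivalence relation containing the pushout gluing relation. -/
def BigRel (x : VX) (y : VY) :
    (IndSetH (Amal.inl f₁ f₂) VX ⊕ IndSetH (Amal.inr f₁ f₂) VY) →
    (IndSetH (Amal.inl f₁ f₂) VX ⊕ IndSetH (Amal.inr f₁ f₂) VY) → Prop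
  | Sum.inl u, Sum.inl u' => u = u' ∨ ∃ g g' : Amal f₁ f₂,
      u = IndSetH.mk (Amal.inl f₁ f₂) VX (g, x) ∧
      u' = IndSetH.mk (Amal.inl f₁ f₂) VX (g', x) ∧ g⁻¹ * g' ∈ HS f₁ f₂ x y
  | Sum.inl u, Sum.inr w => ∃ g g' : Amal f₁ f₂,
      u = IndSetH.mk (Amal.inl f₁ f₂) VX (g, x) ∧
      w = IndSetH.mk (Amal.inr f₁ f₂) VY (g', y) ∧ g⁻¹ * g' ∈ HS f₁ f₂ x y
  | Sum.inr w, Sum.inl u => ∃ g g' : Amal f₁ f₂,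
      w = IndSetH.mk (Amal.inr f₁ f₂) VY (g, y) ∧
      u = IndSetH.mk (Amal.inl f₁ f₂) VX (g', x) ∧ g⁻¹ * g' ∈ HS f₁ f₂ x y
  | Sum.inr w, Sum.inr w' => w = w' ∨ ∃ g g' : Amal f₁ f₂,
      w = IndSetH.mk (Amal.inr f₁ f₂) VY (g, y) ∧
      w' = IndSetH.mk (Amal.inr f₁ f₂) VY (g', y) ∧ g⁻¹ * g' ∈ HS f₁ f₂ x y

theorem bigRel_equivalence (x : VX) (y : VY) : Equivalence (BigRel f₁ f₂ x y) := by
  constructor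
  · rintro (u | w)
    · exact Or.inl rfl
    · exact Or.inl rfl
  · rintro (u | w) (u' | w') h
    · rcases h with rfl | ⟨g, g', h1, h2, h3⟩
      · exact Or.inl rfl
      · exact Or.inr ⟨g', g, h2, h1, inv_rel h3⟩
    · obtain ⟨g, g', h1, h2, h3⟩ := h
      exact ⟨g', g, h2, h1, inv_rel h3⟩
    · obtain ⟨g, g', h1, h2, h3⟩ := h
      exact ⟨g', g, h2, h1, inv_rel h3⟩
    · rcases h with rfl | ⟨g, g', h1, h2, h3⟩
      · exact Or.inl rfl
      · exact Or.inr ⟨g', g, h2, h1, inv_rel h3⟩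
  · rintro (u | w) (u' | w') (u'' | w'') h h'
    · -- inl inl inl
      rcases h with rfl | ⟨g, g', h1, h2, h3⟩
      · exact h'
      · rcases h' with rfl | ⟨k, k', h4, h5, h6⟩
        · exact Or.inr ⟨g, g', h1, h2, h3⟩
        · exact Or.inr ⟨g, k', h1, h5, chain3 h3 (mkx_eq (h2 ▸ h4)) h6⟩
    · -- inl inl inr
      rcases h with rfl | ⟨g, g', h1, h2, h3⟩
      · exact h'
      · obtain ⟨k, k', h4, h5, h6⟩ := h'
        exact ⟨g, k', h1, h5, chain3 h3 (mkx_eq (h2 ▸ h4)) h6⟩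
    · -- inl inr inl
      obtain ⟨g, g', h1, h2, h3⟩ := h
      obtain ⟨k, k', h4, h5, h6⟩ := h'
      exact Or.inr ⟨g, k', h1, h5, chain3 h3 (mky_eq (h2 ▸ h4)) h6⟩
    · -- inl inr inr
      obtain ⟨g, g', h1, h2, h3⟩ := h
      rcases h' with rfl | ⟨k, k', h4, h5, h6⟩
      · exact ⟨g, g', h1, h2, h3⟩
      · exact ⟨g, k', h1, h5, chain3 h3 (mky_eq (h2 ▸ h4)) h6⟩
    · -- inr inl inl
      obtain ⟨g, g', h1, h2, h3⟩ := h
      rcases h' with rfl | ⟨k, k', h4, h5, h6⟩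
      · exact ⟨g, g', h1, h2, h3⟩
      · exact ⟨g, k', h1, h5, chain3 h3 (mkx_eq (h2 ▸ h4)) h6⟩
    · -- inr inl inr
      obtain ⟨g, g', h1, h2, h3⟩ := h
      obtain ⟨k, k', h4, h5, h6⟩ := h'
      exact Or.inr ⟨g, k', h1, h5, chain3 h3 (mkx_eq (h2 ▸ h4)) h6⟩
    · -- inr inr inl
      rcases h with rfl | ⟨g, g', h1, h2, h3⟩
      · exact h'
      · obtain ⟨k, k', h4, h5, h6⟩ := h'
        exact ⟨g, k', h1, h5, chain3 h3 (mky_eq (h2 ▸ h4)) h6⟩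
    · -- inr inr inr
      rcases h with rfl | ⟨g, g', h1, h2, h3⟩
      · exact h'
      · rcases h' with rfl | ⟨k, k', h4, h5, h6⟩
        · exact Or.inr ⟨g, g', h1, h2, h3⟩
        · exact Or.inr ⟨g, k', h1, h5, chain3 h3 (mky_eq (h2 ▸ h4)) h6⟩

theorem amalPRel_le_bigRel (x : VX) (y : VY) :
    ∀ u v, AmalPRel f₁ f₂ x y u v → BigRel f₁ f₂ x y u v := by
  rintro u v ⟨g, rfl, rfl⟩
  exact ⟨g, g, rfl, rfl, by simpa using Subgroup.one_mem _⟩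

theorem pushv_eq {x : VX} {y : VY}
    {u v : IndSetH (Amal.inl f₁ f₂) VX ⊕ IndSetH (Amal.inr f₁ f₂) VY}
    (h : PushV.mk f₁ f₂ x y u = PushV.mk f₁ f₂ x y v) : BigRel f₁ f₂ x y u v :=
  ((bigRel_equivalence x y).eqvGen_iff).1 ((Quot.eq.1 h).mono (amalPRel_le_bigRel x y))

end GraphSide

section Final

variable {C G₁ G₂ : Type*} [Group C] [Group G₁] [Group G₂]
  {f₁ : C →* G₁} {f₂ : C →* G₂}
  {VX VY : Type*} [MulAction G₁ VX] [MulAction G₂ VY]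
  {x : VX} {y : VY}

theorem range_le_stab₁ (hx : ∀ c : C, f₁ c • x = x) :
    f₁.range ≤ MulAction.stabilizer G₁ x := by
  rintro g ⟨c, rfl⟩
  exact hx c

theorem range_le_stab₂ (hy : ∀ c : C, f₂ c • y = y) :
    f₂.range ≤ MulAction.stabilizer G₂ y := by
  rintro g ⟨c, rfl⟩
  exact hy c

theorem ind_decomp_l {g g' : Amal f₁ f₂} {v w : VX}
    (h : IndSetH.mk (Amal.inl f₁ f₂) VX (g, v) = IndSetH.mk (Amal.inl f₁ f₂) VX (g', w)) :
    ∃ p : G₁, g = g' * Amal.inl f₁ f₂ p ∧ w = p • v := by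
  obtain ⟨p, h1, h2⟩ := (indSetH_mk_eq _ _).1 h
  exact ⟨p, h1, h2⟩

theorem ind_decomp_r {g g' : Amal f₁ f₂} {v w : VY}
    (h : IndSetH.mk (Amal.inr f₁ f₂) VY (g, v) = IndSetH.mk (Amal.inr f₁ f₂) VY (g', w)) :
    ∃ p : G₂, g = g' * Amal.inr f₁ f₂ p ∧ w = p • v := by
  obtain ⟨p, h1, h2⟩ := (indSetH_mk_eq _ _).1 h
  exact ⟨p, h1, h2⟩

theorem inX_injective (hf₁ : Injective f₁) (hf₂ : Injective f₂)
    (hx : ∀ c : C, f₁ c • x = x) (hy : ∀ c : C, f₂ c • y = y) :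
    Injective (PushV.inX f₁ f₂ x y) := by
  intro a b h
  have h' : PushV.mk f₁ f₂ x y (Sum.inl (IndSetH.mk (Amal.inl f₁ f₂) VX (1, a)))
      = PushV.mk f₁ f₂ x y (Sum.inl (IndSetH.mk (Amal.inl f₁ f₂) VX (1, b))) := h
  rcases pushv_eq h' with heq | ⟨g, g', h1, h2, h3⟩
  · obtain ⟨p, hp1, hp2⟩ := ind_decomp_l heq
    have hp : Amal.inl f₁ f₂ p = Amal.inl f₁ f₂ 1 := by
      rw [one_mul] at hp1
      rw [map_one]
      exact hp1.symm
    have : p = (1 : G₁) := amal_inl_injective hf₁ hf₂ hp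
    rw [this, one_smul] at hp2
    exact hp2.symm
  · obtain ⟨p, hp1, hp2⟩ := ind_decomp_l h1
    obtain ⟨q, hq1, hq2⟩ := ind_decomp_l h2
    have hg : g = (Amal.inl f₁ f₂ p)⁻¹ := mul_eq_one_iff_eq_inv.1 hp1.symm
    have hg' : g' = (Amal.inl f₁ f₂ q)⁻¹ := mul_eq_one_iff_eq_inv.1 hq1.symm
    have hgg : g⁻¹ * g' = Amal.inl f₁ f₂ (p * q⁻¹) := by
      rw [hg, hg', map_mul, map_inv]; group
    have ht : (p * q⁻¹) • x = x :=
      amal_crux_l hf₁ hf₂ (range_le_stab₁ hx) (range_le_stab₂ hy) (hgg ▸ h3)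
    calc a = p⁻¹ • x := by rw [hp2, inv_smul_smul]
      _ = p⁻¹ • ((p * q⁻¹) • x) := by rw [ht]
      _ = q⁻¹ • x := by rw [smul_smul]; congr 1; group
      _ = b := by rw [hq2, inv_smul_smul]

theorem inY_injective (hf₁ : Injective f₁) (hf₂ : Injective f₂)
    (hx : ∀ c : C, f₁ c • x = x) (hy : ∀ c : C, f₂ c • y = y) :
    Injective (PushV.inY f₁ f₂ x y) := by
  intro a b h
  have h' : PushV.mk f₁ f₂ x y (Sum.inr (IndSetH.mk (Amal.inr f₁ f₂) VY (1, a)))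
      = PushV.mk f₁ f₂ x y (Sum.inr (IndSetH.mk (Amal.inr f₁ f₂) VY (1, b))) := h
  rcases pushv_eq h' with heq | ⟨g, g', h1, h2, h3⟩
  · obtain ⟨p, hp1, hp2⟩ := ind_decomp_r heq
    have hp : Amal.inr f₁ f₂ p = Amal.inr f₁ f₂ 1 := by
      rw [one_mul] at hp1
      rw [map_one]
      exact hp1.symm
    have : p = (1 : G₂) := amal_inr_injective hf₁ hf₂ hp
    rw [this, one_smul] at hp2
    exact hp2.symm
  · obtain ⟨p, hp1, hp2⟩ := ind_decomp_r h1
    obtain ⟨q, hq1, hq2⟩ := ind_decomp_r h2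
    have hg : g = (Amal.inr f₁ f₂ p)⁻¹ := mul_eq_one_iff_eq_inv.1 hp1.symm
    have hg' : g' = (Amal.inr f₁ f₂ q)⁻¹ := mul_eq_one_iff_eq_inv.1 hq1.symm
    have hgg : g⁻¹ * g' = Amal.inr f₁ f₂ (p * q⁻¹) := by
      rw [hg, hg', map_mul, map_inv]; group
    have ht : (p * q⁻¹) • y = y :=
      amal_crux_r hf₁ hf₂ (range_le_stab₁ hx) (range_le_stab₂ hy) (hgg ▸ h3)
    calc a = p⁻¹ • y := by rw [hp2, inv_smul_smul]
      _ = p⁻¹ • ((p * q⁻¹) • y) := by rw [ht]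
      _ = q⁻¹ • y := by rw [smul_smul]; congr 1; group
      _ = b := by rw [hq2, inv_smul_smul]

theorem inX_equivariant (g : G₁) (v : VX) :
    PushV.inX f₁ f₂ x y (g • v) = Amal.inl f₁ f₂ g • PushV.inX f₁ f₂ x y v := by
  have hsmul : Amal.inl f₁ f₂ g • PushV.inX f₁ f₂ x y v
      = PushV.mk f₁ f₂ x y (Sum.inl (IndSetH.mk (Amal.inl f₁ f₂) VX
          (Amal.inl f₁ f₂ g * 1, v))) := rfl
  rw [hsmul]
  refine congrArg (fun u => PushV.mk f₁ f₂ x y (Sum.inl u)) ?_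
  refine (indSetH_mk_eq _ _).2 ⟨g⁻¹, ?_, ?_⟩
  · show (1 : Amal f₁ f₂) = Amal.inl f₁ f₂ g * 1 * Amal.inl f₁ f₂ g⁻¹
    rw [map_inv]; group
  · show v = g⁻¹ • g • v
    rw [inv_smul_smul]

theorem inY_equivariant (g : G₂) (v : VY) :
    PushV.inY f₁ f₂ x y (g • v) = Amal.inr f₁ f₂ g • PushV.inY f₁ f₂ x y v := by
  have hsmul : Amal.inr f₁ f₂ g • PushV.inY f₁ f₂ x y v
      = PushV.mk f₁ f₂ x y (Sum.inr (IndSetH.mk (Amal.inr f₁ f₂) VY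
          (Amal.inr f₁ f₂ g * 1, v))) := rfl
  rw [hsmul]
  refine congrArg (fun u => PushV.mk f₁ f₂ x y (Sum.inr u)) ?_
  refine (indSetH_mk_eq _ _).2 ⟨g⁻¹, ?_, ?_⟩
  · show (1 : Amal f₁ f₂) = Amal.inr f₁ f₂ g * 1 * Amal.inr f₁ f₂ g⁻¹
    rw [map_inv]; group
  · show v = g⁻¹ • g • v
    rw [inv_smul_smul]

theorem pushAdj_inX (hf₁ : Injective f₁) (hf₂ : Injective f₂)
    {X : SimpleGraph VX} {Y : SimpleGraph VY}
    (hX : ∀ (g : G₁) (a b : VX), X.Adj a b → X.Adj (g • a) (g • b))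
    (hx : ∀ c : C, f₁ c • x = x) (hy : ∀ c : C, f₂ c • y = y)
    {a b : VX} (h : PushAdj f₁ f₂ X Y x y (PushV.inX f₁ f₂ x y a) (PushV.inX f₁ f₂ x y b)) :
    X.Adj a b := by
  have hS₁ := range_le_stab₁ hx
  have hS₂ := range_le_stab₂ hy
  rcases h with ⟨g, a', b', hadj, hua, hub⟩ | ⟨g, a', b', hadj, hua, hub⟩
  · -- the edge comes from a copy of `X`
    have hua' : PushV.mk f₁ f₂ x y (Sum.inl (IndSetH.mk (Amal.inl f₁ f₂) VX (1, a)))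
        = PushV.mk f₁ f₂ x y (Sum.inl (IndSetH.mk (Amal.inl f₁ f₂) VX (g, a'))) := hua
    have hub' : PushV.mk f₁ f₂ x y (Sum.inl (IndSetH.mk (Amal.inl f₁ f₂) VX (1, b)))
        = PushV.mk f₁ f₂ x y (Sum.inl (IndSetH.mk (Amal.inl f₁ f₂) VX (g, b'))) := hub
    rcases pushv_eq hua' with haeq | ⟨h, h₁, ha1, ha2, hA⟩
    · rcases pushv_eq hub' with hbeq | ⟨k, k₁, hb1, hb2, hB⟩
      · -- both endpoints are matched directly
        obtain ⟨p, hp1, hp2⟩ := ind_decomp_l haeq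
        obtain ⟨q, hq1, hq2⟩ := ind_decomp_l hbeq
        have hpq : p = q :=
          amal_inl_injective hf₁ hf₂ (mul_left_cancel (hp1.symm.trans hq1))
        subst hpq
        rw [hp2, hq2] at hadj
        have := hX p⁻¹ _ _ hadj
        simpa using this
      · -- `a` direct, `b` through the base point
        obtain ⟨p, hp1, hp2⟩ := ind_decomp_l haeq
        obtain ⟨s, hs1, hs2⟩ := ind_decomp_l hb1
        obtain ⟨r, hr1, hr2⟩ := ind_decomp_l hb2
        have hg : g = (Amal.inl f₁ f₂ p)⁻¹ := mul_eq_one_iff_eq_inv.1 hp1.symm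
        have hk : k = (Amal.inl f₁ f₂ s)⁻¹ := mul_eq_one_iff_eq_inv.1 hs1.symm
        have hk₁ : k₁ = g * (Amal.inl f₁ f₂ r)⁻¹ := eq_mul_inv_of_mul_eq hr1.symm
        have hcomp : k⁻¹ * k₁ = Amal.inl f₁ f₂ (s * p⁻¹ * r⁻¹) := by
          rw [hk, hk₁, hg, map_mul, map_mul, map_inv, map_inv]; group
        have ht : (s * p⁻¹ * r⁻¹) • x = x :=
          amal_crux_l hf₁ hf₂ hS₁ hS₂ (hcomp ▸ hB)
        rw [hp2] at hadj
        have hb' : b' = r⁻¹ • x := by rw [hr2, inv_smul_smul]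
        rw [hb'] at hadj
        have := hX p⁻¹ _ _ hadj
        rw [inv_smul_smul] at this
        have hbx : p⁻¹ • r⁻¹ • x = b := by
          rw [smul_smul]
          calc (p⁻¹ * r⁻¹) • x = s⁻¹ • ((s * p⁻¹ * r⁻¹) • x) := by
                rw [smul_smul]; congr 1; group
            _ = s⁻¹ • x := by rw [ht]
            _ = b := by rw [hs2, inv_smul_smul]
        rwa [hbx] at this
    · rcases pushv_eq hub' with hbeq | ⟨k, k₁, hb1, hb2, hB⟩
      · -- `a` through the base point, `b` direct
        obtain ⟨q, hq1, hq2⟩ := ind_decomp_l hbeq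
        obtain ⟨s, hs1, hs2⟩ := ind_decomp_l ha1
        obtain ⟨r, hr1, hr2⟩ := ind_decomp_l ha2
        have hg : g = (Amal.inl f₁ f₂ q)⁻¹ := mul_eq_one_iff_eq_inv.1 hq1.symm
        have hh : h = (Amal.inl f₁ f₂ s)⁻¹ := mul_eq_one_iff_eq_inv.1 hs1.symm
        have hh₁ : h₁ = g * (Amal.inl f₁ f₂ r)⁻¹ := eq_mul_inv_of_mul_eq hr1.symm
        have hcomp : h⁻¹ * h₁ = Amal.inl f₁ f₂ (s * q⁻¹ * r⁻¹) := by
          rw [hh, hh₁, hg, map_mul, map_mul, map_inv, map_inv]; group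
        have ht : (s * q⁻¹ * r⁻¹) • x = x :=
          amal_crux_l hf₁ hf₂ hS₁ hS₂ (hcomp ▸ hA)
        rw [hq2] at hadj
        have ha' : a' = r⁻¹ • x := by rw [hr2, inv_smul_smul]
        rw [ha'] at hadj
        have := hX q⁻¹ _ _ hadj
        rw [inv_smul_smul] at this
        have hax : q⁻¹ • r⁻¹ • x = a := by
          rw [smul_smul]
          calc (q⁻¹ * r⁻¹) • x = s⁻¹ • ((s * q⁻¹ * r⁻¹) • x) := by
                rw [smul_smul]; congr 1; group
            _ = s⁻¹ • x := by rw [ht]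
            _ = a := by rw [hs2, inv_smul_smul]
        rwa [hax] at this
      · -- both endpoints through the base point
        obtain ⟨s, hs1, hs2⟩ := ind_decomp_l ha1
        obtain ⟨u, hu1, hu2⟩ := ind_decomp_l ha2
        obtain ⟨t, ht1, ht2⟩ := ind_decomp_l hb1
        obtain ⟨v, hv1, hv2⟩ := ind_decomp_l hb2
        have hh : h = (Amal.inl f₁ f₂ s)⁻¹ := mul_eq_one_iff_eq_inv.1 hs1.symm
        have hk : k = (Amal.inl f₁ f₂ t)⁻¹ := mul_eq_one_iff_eq_inv.1 ht1.symm
        have hcompA : h⁻¹ * h₁ = Amal.inl f₁ f₂ s * g * (Amal.inl f₁ f₂ u)⁻¹ := by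
          rw [hh, hu1]; group
        have hcompB : k⁻¹ * k₁ = Amal.inl f₁ f₂ t * g * (Amal.inl f₁ f₂ v)⁻¹ := by
          rw [hk, hv1]; group
        have hE : Amal.inl f₁ f₂ (t * s⁻¹) * (h⁻¹ * h₁) * Amal.inl f₁ f₂ (u * v⁻¹)
            = k⁻¹ * k₁ := by
          rw [hcompA, hcompB, map_mul, map_mul, map_inv, map_inv]; group
        obtain ⟨σ, hσ, hσ2⟩ := amal_star_l hf₁ hf₂ hS₁ hS₂ hA (by rw [hE]; exact hB)
        have ha' : a' = u⁻¹ • x := by rw [hu2, inv_smul_smul]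
        have hb' : b' = v⁻¹ • x := by rw [hv2, inv_smul_smul]
        rw [ha', hb'] at hadj
        have hadj2 := hX (s⁻¹ * σ * u) _ _ hadj
        rw [smul_smul, smul_smul] at hadj2
        have e1 : (s⁻¹ * σ * u * u⁻¹) • x = a := by
          have : s⁻¹ * σ * u * u⁻¹ = s⁻¹ * σ := by group
          rw [this, ← smul_smul, hσ, hs2, inv_smul_smul]
        have e2 : (s⁻¹ * σ * u * v⁻¹) • x = b := by
          have : s⁻¹ * σ * u * v⁻¹ = t⁻¹ * (t * s⁻¹ * σ * (u * v⁻¹)) := by group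
          rw [this, ← smul_smul, hσ2, ht2, inv_smul_smul]
        rwa [e1, e2] at hadj2
  · -- the edge comes from a copy of `Y`: impossible
    exfalso
    have hua' : PushV.mk f₁ f₂ x y (Sum.inl (IndSetH.mk (Amal.inl f₁ f₂) VX (1, a)))
        = PushV.mk f₁ f₂ x y (Sum.inr (IndSetH.mk (Amal.inr f₁ f₂) VY (g, a'))) := hua
    have hub' : PushV.mk f₁ f₂ x y (Sum.inl (IndSetH.mk (Amal.inl f₁ f₂) VX (1, b)))
        = PushV.mk f₁ f₂ x y (Sum.inr (IndSetH.mk (Amal.inr f₁ f₂) VY (g, b'))) := hub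
    obtain ⟨h, h₁, ha1, ha2, hA⟩ := pushv_eq hua'
    obtain ⟨k, k₁, hb1, hb2, hB⟩ := pushv_eq hub'
    obtain ⟨s, hs1, hs2⟩ := ind_decomp_l ha1
    obtain ⟨u, hu1, hu2⟩ := ind_decomp_r ha2
    obtain ⟨t, ht1, ht2⟩ := ind_decomp_l hb1
    obtain ⟨v, hv1, hv2⟩ := ind_decomp_r hb2
    have hh : h = (Amal.inl f₁ f₂ s)⁻¹ := mul_eq_one_iff_eq_inv.1 hs1.symm
    have hk : k = (Amal.inl f₁ f₂ t)⁻¹ := mul_eq_one_iff_eq_inv.1 ht1.symm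
    have hcompA : h⁻¹ * h₁ = Amal.inl f₁ f₂ s * g * (Amal.inr f₁ f₂ u)⁻¹ := by
      rw [hh, hu1]; group
    have hcompB : k⁻¹ * k₁ = Amal.inl f₁ f₂ t * g * (Amal.inr f₁ f₂ v)⁻¹ := by
      rw [hk, hv1]; group
    have hE : Amal.inl f₁ f₂ (t * s⁻¹) * (h⁻¹ * h₁) * Amal.inr f₁ f₂ (u * v⁻¹)
        = k⁻¹ * k₁ := by
      rw [hcompA, hcompB, map_mul, map_mul, map_inv, map_inv]; group
    obtain ⟨-, huv⟩ := amal_star_mixed_lr hf₁ hf₂ hS₁ hS₂ hA (by rw [hE]; exact hB)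
    have hyy : (u * v⁻¹) • y = y := huv
    have hab : a' = b' := by
      have ha' : a' = u⁻¹ • y := by rw [hu2, inv_smul_smul]
      have hb' : b' = v⁻¹ • y := by rw [hv2, inv_smul_smul]
      rw [ha', hb']
      have := congrArg (fun z => u⁻¹ • z) hyy
      simp only [smul_smul] at this
      calc u⁻¹ • y = (u⁻¹ * (u * v⁻¹)) • y := by rw [← smul_smul, hyy]
        _ = v⁻¹ • y := by congr 1; group
    exact hadj.ne hab

theorem pushAdj_inY (hf₁ : Injective f₁) (hf₂ : Injective f₂)
    {X : SimpleGraph VX} {Y : SimpleGraph VY}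
    (hY : ∀ (g : G₂) (a b : VY), Y.Adj a b → Y.Adj (g • a) (g • b))
    (hx : ∀ c : C, f₁ c • x = x) (hy : ∀ c : C, f₂ c • y = y)
    {a b : VY} (h : PushAdj f₁ f₂ X Y x y (PushV.inY f₁ f₂ x y a) (PushV.inY f₁ f₂ x y b)) :
    Y.Adj a b := by
  have hS₁ := range_le_stab₁ hx
  have hS₂ := range_le_stab₂ hy
  rcases h with ⟨g, a', b', hadj, hua, hub⟩ | ⟨g, a', b', hadj, hua, hub⟩
  · -- the edge comes from a copy of `X`: impossible
    exfalso
    have hua' : PushV.mk f₁ f₂ x y (Sum.inr (IndSetH.mk (Amal.inr f₁ f₂) VY (1, a)))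
        = PushV.mk f₁ f₂ x y (Sum.inl (IndSetH.mk (Amal.inl f₁ f₂) VX (g, a'))) := hua
    have hub' : PushV.mk f₁ f₂ x y (Sum.inr (IndSetH.mk (Amal.inr f₁ f₂) VY (1, b)))
        = PushV.mk f₁ f₂ x y (Sum.inl (IndSetH.mk (Amal.inl f₁ f₂) VX (g, b'))) := hub
    obtain ⟨h, h₁, ha1, ha2, hA⟩ := pushv_eq hua'
    obtain ⟨k, k₁, hb1, hb2, hB⟩ := pushv_eq hub'
    obtain ⟨s, hs1, hs2⟩ := ind_decomp_r ha1
    obtain ⟨u, hu1, hu2⟩ := ind_decomp_l ha2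
    obtain ⟨t, ht1, ht2⟩ := ind_decomp_r hb1
    obtain ⟨v, hv1, hv2⟩ := ind_decomp_l hb2
    have hh : h = (Amal.inr f₁ f₂ s)⁻¹ := mul_eq_one_iff_eq_inv.1 hs1.symm
    have hk : k = (Amal.inr f₁ f₂ t)⁻¹ := mul_eq_one_iff_eq_inv.1 ht1.symm
    have hcompA : h⁻¹ * h₁ = Amal.inr f₁ f₂ s * g * (Amal.inl f₁ f₂ u)⁻¹ := by
      rw [hh, hu1]; group
    have hcompB : k⁻¹ * k₁ = Amal.inr f₁ f₂ t * g * (Amal.inl f₁ f₂ v)⁻¹ := by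
      rw [hk, hv1]; group
    have hE : Amal.inr f₁ f₂ (t * s⁻¹) * (h⁻¹ * h₁) * Amal.inl f₁ f₂ (u * v⁻¹)
        = k⁻¹ * k₁ := by
      rw [hcompA, hcompB, map_mul, map_mul, map_inv, map_inv]; group
    obtain ⟨-, huv⟩ := amal_star_mixed_rl hf₁ hf₂ hS₁ hS₂ hA (by rw [hE]; exact hB)
    have hxx : (u * v⁻¹) • x = x := huv
    have hab : a' = b' := by
      have ha' : a' = u⁻¹ • x := by rw [hu2, inv_smul_smul]
      have hb' : b' = v⁻¹ • x := by rw [hv2, inv_smul_smul]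
      rw [ha', hb']
      calc u⁻¹ • x = (u⁻¹ * (u * v⁻¹)) • x := by rw [← smul_smul, hxx]
        _ = v⁻¹ • x := by congr 1; group
    exact hadj.ne hab
  · -- the edge comes from a copy of `Y`
    have hua' : PushV.mk f₁ f₂ x y (Sum.inr (IndSetH.mk (Amal.inr f₁ f₂) VY (1, a)))
        = PushV.mk f₁ f₂ x y (Sum.inr (IndSetH.mk (Amal.inr f₁ f₂) VY (g, a'))) := hua
    have hub' : PushV.mk f₁ f₂ x y (Sum.inr (IndSetH.mk (Amal.inr f₁ f₂) VY (1, b)))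
        = PushV.mk f₁ f₂ x y (Sum.inr (IndSetH.mk (Amal.inr f₁ f₂) VY (g, b'))) := hub
    rcases pushv_eq hua' with haeq | ⟨h, h₁, ha1, ha2, hA⟩
    · rcases pushv_eq hub' with hbeq | ⟨k, k₁, hb1, hb2, hB⟩
      · obtain ⟨p, hp1, hp2⟩ := ind_decomp_r haeq
        obtain ⟨q, hq1, hq2⟩ := ind_decomp_r hbeq
        have hpq : p = q :=
          amal_inr_injective hf₁ hf₂ (mul_left_cancel (hp1.symm.trans hq1))
        subst hpq
        rw [hp2, hq2] at hadj
        have := hY p⁻¹ _ _ hadj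
        simpa using this
      · obtain ⟨p, hp1, hp2⟩ := ind_decomp_r haeq
        obtain ⟨s, hs1, hs2⟩ := ind_decomp_r hb1
        obtain ⟨r, hr1, hr2⟩ := ind_decomp_r hb2
        have hg : g = (Amal.inr f₁ f₂ p)⁻¹ := mul_eq_one_iff_eq_inv.1 hp1.symm
        have hk : k = (Amal.inr f₁ f₂ s)⁻¹ := mul_eq_one_iff_eq_inv.1 hs1.symm
        have hk₁ : k₁ = g * (Amal.inr f₁ f₂ r)⁻¹ := eq_mul_inv_of_mul_eq hr1.symm
        have hcomp : k⁻¹ * k₁ = Amal.inr f₁ f₂ (s * p⁻¹ * r⁻¹) := by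
          rw [hk, hk₁, hg, map_mul, map_mul, map_inv, map_inv]; group
        have ht : (s * p⁻¹ * r⁻¹) • y = y :=
          amal_crux_r hf₁ hf₂ hS₁ hS₂ (hcomp ▸ hB)
        rw [hp2] at hadj
        have hb' : b' = r⁻¹ • y := by rw [hr2, inv_smul_smul]
        rw [hb'] at hadj
        have := hY p⁻¹ _ _ hadj
        rw [inv_smul_smul] at this
        have hby : p⁻¹ • r⁻¹ • y = b := by
          rw [smul_smul]
          calc (p⁻¹ * r⁻¹) • y = s⁻¹ • ((s * p⁻¹ * r⁻¹) • y) := by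
                rw [smul_smul]; congr 1; group
            _ = s⁻¹ • y := by rw [ht]
            _ = b := by rw [hs2, inv_smul_smul]
        rwa [hby] at this
    · rcases pushv_eq hub' with hbeq | ⟨k, k₁, hb1, hb2, hB⟩
      · obtain ⟨q, hq1, hq2⟩ := ind_decomp_r hbeq
        obtain ⟨s, hs1, hs2⟩ := ind_decomp_r ha1
        obtain ⟨r, hr1, hr2⟩ := ind_decomp_r ha2
        have hg : g = (Amal.inr f₁ f₂ q)⁻¹ := mul_eq_one_iff_eq_inv.1 hq1.symm
        have hh : h = (Amal.inr f₁ f₂ s)⁻¹ := mul_eq_one_iff_eq_inv.1 hs1.symm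
        have hh₁ : h₁ = g * (Amal.inr f₁ f₂ r)⁻¹ := eq_mul_inv_of_mul_eq hr1.symm
        have hcomp : h⁻¹ * h₁ = Amal.inr f₁ f₂ (s * q⁻¹ * r⁻¹) := by
          rw [hh, hh₁, hg, map_mul, map_mul, map_inv, map_inv]; group
        have ht : (s * q⁻¹ * r⁻¹) • y = y :=
          amal_crux_r hf₁ hf₂ hS₁ hS₂ (hcomp ▸ hA)
        rw [hq2] at hadj
        have ha' : a' = r⁻¹ • y := by rw [hr2, inv_smul_smul]
        rw [ha'] at hadj
        have := hY q⁻¹ _ _ hadj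
        rw [inv_smul_smul] at this
        have hay : q⁻¹ • r⁻¹ • y = a := by
          rw [smul_smul]
          calc (q⁻¹ * r⁻¹) • y = s⁻¹ • ((s * q⁻¹ * r⁻¹) • y) := by
                rw [smul_smul]; congr 1; group
            _ = s⁻¹ • y := by rw [ht]
            _ = a := by rw [hs2, inv_smul_smul]
        rwa [hay] at this
      · obtain ⟨s, hs1, hs2⟩ := ind_decomp_r ha1
        obtain ⟨u, hu1, hu2⟩ := ind_decomp_r ha2
        obtain ⟨t, ht1, ht2⟩ := ind_decomp_r hb1
        obtain ⟨v, hv1, hv2⟩ := ind_decomp_r hb2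
        have hh : h = (Amal.inr f₁ f₂ s)⁻¹ := mul_eq_one_iff_eq_inv.1 hs1.symm
        have hk : k = (Amal.inr f₁ f₂ t)⁻¹ := mul_eq_one_iff_eq_inv.1 ht1.symm
        have hcompA : h⁻¹ * h₁ = Amal.inr f₁ f₂ s * g * (Amal.inr f₁ f₂ u)⁻¹ := by
          rw [hh, hu1]; group
        have hcompB : k⁻¹ * k₁ = Amal.inr f₁ f₂ t * g * (Amal.inr f₁ f₂ v)⁻¹ := by
          rw [hk, hv1]; group
        have hE : Amal.inr f₁ f₂ (t * s⁻¹) * (h⁻¹ * h₁) * Amal.inr f₁ f₂ (u * v⁻¹)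
            = k⁻¹ * k₁ := by
          rw [hcompA, hcompB, map_mul, map_mul, map_inv, map_inv]; group
        obtain ⟨σ, hσ, hσ2⟩ := amal_star_r hf₁ hf₂ hS₁ hS₂ hA (by rw [hE]; exact hB)
        have ha' : a' = u⁻¹ • y := by rw [hu2, inv_smul_smul]
        have hb' : b' = v⁻¹ • y := by rw [hv2, inv_smul_smul]
        rw [ha', hb'] at hadj
        have hadj2 := hY (s⁻¹ * σ * u) _ _ hadj
        rw [smul_smul, smul_smul] at hadj2
        have e1 : (s⁻¹ * σ * u * u⁻¹) • y = a := by
          have : s⁻¹ * σ * u * u⁻¹ = s⁻¹ * σ := by group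
          rw [this, ← smul_smul, hσ, hs2, inv_smul_smul]
        have e2 : (s⁻¹ * σ * u * v⁻¹) • y = b := by
          have : s⁻¹ * σ * u * v⁻¹ = t⁻¹ * (t * s⁻¹ * σ * (u * v⁻¹)) := by group
          rw [this, ← smul_smul, hσ2, ht2, inv_smul_smul]
        rwa [e1, e2] at hadj2

end Final

end AmalAux


/-- Let `G = A ∗_C B`, `X` an `A`-graph, `Y` a `B`-graph, `x ∈ X` fixed
by `∂₁(C)` and `y ∈ Y` fixed by `∂₂(C)`, and `Z` the `C`-pushout of `G ×_A X` and
`G ×_B Y` w.r.t. `(x, y)`.  Then the composition `X ↪ G ×_A X → Z` is an `A`-equivariant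
embedding of graphs, and likewise `Y ↪ G ×_B Y → Z` is a `B`-equivariant embedding. -/
theorem pushout_canonical_embeddings
    {C G₁ G₂ : Type*} [Group C] [Group G₁] [Group G₂]
    (f₁ : C →* G₁) (f₂ : C →* G₂)
    (hf₁ : Function.Injective f₁) (hf₂ : Function.Injective f₂)
    {VX VY : Type*} [MulAction G₁ VX] [MulAction G₂ VY]
    (X : SimpleGraph VX) (Y : SimpleGraph VY)
    (hX : ∀ (g : G₁) (a b : VX), X.Adj a b → X.Adj (g • a) (g • b))
    (hY : ∀ (g : G₂) (a b : VY), Y.Adj a b → Y.Adj (g • a) (g • b))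
    (x : VX) (y : VY)
    (hx : ∀ c : C, f₁ c • x = x) (hy : ∀ c : C, f₂ c • y = y) :
    (Function.Injective (PushV.inX f₁ f₂ x y) ∧
      (∀ a b : VX, X.Adj a b ↔
        (PushGraph f₁ f₂ X Y x y).Adj (PushV.inX f₁ f₂ x y a) (PushV.inX f₁ f₂ x y b)) ∧
      (∀ (g : G₁) (v : VX),
        PushV.inX f₁ f₂ x y (g • v) = Amal.inl f₁ f₂ g • PushV.inX f₁ f₂ x y v)) ∧
    (Function.Injective (PushV.inY f₁ f₂ x y) ∧
      (∀ a b : VY, Y.Adj a b ↔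
        (PushGraph f₁ f₂ X Y x y).Adj (PushV.inY f₁ f₂ x y a) (PushV.inY f₁ f₂ x y b)) ∧
      (∀ (g : G₂) (w : VY),
        PushV.inY f₁ f₂ x y (g • w) = Amal.inr f₁ f₂ g • PushV.inY f₁ f₂ x y w)) := by
  constructor
  · refine ⟨AmalAux.inX_injective hf₁ hf₂ hx hy, ?_,
      fun g v => AmalAux.inX_equivariant g v⟩
    intro a b
    constructor
    · intro h
      rw [PushGraph, SimpleGraph.fromRel_adj]
      exact ⟨fun hc => h.ne (AmalAux.inX_injective hf₁ hf₂ hx hy hc),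
        Or.inl (Or.inl ⟨1, a, b, h, rfl, rfl⟩)⟩
    · intro h
      rw [PushGraph, SimpleGraph.fromRel_adj] at h
      rcases h.2 with h' | h'
      · exact AmalAux.pushAdj_inX hf₁ hf₂ hX hx hy h'
      · exact (AmalAux.pushAdj_inX hf₁ hf₂ hX hx hy h').symm
  · refine ⟨AmalAux.inY_injective hf₁ hf₂ hx hy, ?_,
      fun g w => AmalAux.inY_equivariant g w⟩
    intro a b
    constructor
    · intro h
      rw [PushGraph, SimpleGraph.fromRel_adj]
      exact ⟨fun hc => h.ne (AmalAux.inY_injective hf₁ hf₂ hx hy hc),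
        Or.inl (Or.inr ⟨1, a, b, h, rfl, rfl⟩)⟩
    · intro h
      rw [PushGraph, SimpleGraph.fromRel_adj] at h
      rcases h.2 with h' | h'
      · exact AmalAux.pushAdj_inY hf₁ hf₂ hY hx hy h'
      · exact (AmalAux.pushAdj_inY hf₁ hf₂ hY hx hy h').symm
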